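/- arXiv:1303.4234 — 4 statements merged into one kernel-verified Lean document; each statement's English description precedes it below -/
import Mathlib

section
/- Let L_n be a chain on n elements and 2 ≤ t ≤ n. Then the Krull dimension of S/I_t(L_n) equals n − ⌊n/t⌋. -/
open MvPolynomial

noncomputable section
/-- The height of an ideal: the infimum of the heights of the primes containing it. -/
def idealHeight {R : Type*} [CommRing R] (I : Ideal R) : ℕ∞ :=
  ⨅ (p : PrimeSpectrum R) (_ : I ≤ p.asIdeal), Order.height p

/-- The depth of `S/I` over `S = k[x_i]` with respect to the irrelevant maximal ideal:
the supremum of the lengths of regular sequences on `S/I` consisting of elements of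
the ideal generated by the variables. -/
def quotDepth (k : Type) [Field k] (σ : Type) (I : Ideal (MvPolynomial σ k)) : ℕ :=
  sSup {d : ℕ | ∃ rs : List (MvPolynomial σ k), rs.length = d ∧
    (∀ x ∈ rs, x ∈ Ideal.span (Set.range (X : σ → MvPolynomial σ k))) ∧
    RingTheory.Sequence.IsRegular (MvPolynomial σ k ⧸ I) rs}
/-- The path ideal `I_t(L_n)` of the chain `x_1 < ⋯ < x_n`: generated by the products
of `t` consecutive variables. -/
def chainPathIdeal (k : Type) [Field k] (n t : ℕ) : Ideal (MvPolynomial (Fin n) k) :=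
  Ideal.span {f | ∃ i : ℕ, ∃ h : i + t ≤ n,
    f = ∏ j : Fin t, X (⟨i + j.1, Nat.lt_of_lt_of_le (Nat.add_lt_add_left j.2 i) h⟩ : Fin n)}


variable {k : Type} [Field k] {n : ℕ}

/-- The algebra map killing the variables in `B`. -/
noncomputable def killMap (k : Type) [Field k] (n : ℕ) (B : Set (Fin n)) :
    MvPolynomial (Fin n) k →ₐ[k] MvPolynomial (Fin n) k :=
  letI := Classical.decPred (· ∈ B)
  aeval (fun i => if i ∈ B then 0 else X i)

lemma killMap_X (B : Set (Fin n)) (i : Fin n) :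
    killMap k n B (X i) = letI := Classical.decPred (· ∈ B); if i ∈ B then 0 else X i := by
  rw [killMap]; exact aeval_X _ i

lemma killMap_monomial_of_avoid (B : Set (Fin n)) (m : Fin n →₀ ℕ) (c : k)
    (h : ∀ i ∈ B, m i = 0) : killMap k n B (monomial m c) = monomial m c := by
  classical
  rw [killMap, aeval_monomial, monomial_eq]
  congr 1
  rw [Finsupp.prod, Finsupp.prod]
  refine Finset.prod_congr rfl fun i hi => ?_
  have hiB : i ∉ B := fun hiB => (Finsupp.mem_support_iff.mp hi) (h i hiB)
  simp [hiB]

lemma killMap_monomial_of_touch (B : Set (Fin n)) (m : Fin n →₀ ℕ) (c : k)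
    (i : Fin n) (hiB : i ∈ B) (hmi : m i ≠ 0) : killMap k n B (monomial m c) = 0 := by
  classical
  rw [killMap, aeval_monomial, Finsupp.prod]
  have hi : i ∈ m.support := Finsupp.mem_support_iff.mpr hmi
  rw [Finset.prod_eq_zero hi (by simp [hiB, zero_pow hmi])]
  simp

lemma ker_killMap (B : Set (Fin n)) :
    RingHom.ker (killMap k n B : MvPolynomial (Fin n) k →+* MvPolynomial (Fin n) k)
      = Ideal.span (X '' B) := by
  classical
  apply le_antisymm
  · intro f hf
    replace hf : killMap k n B f = 0 := hf
    have hsplit := Finset.sum_filter_add_sum_filter_not f.support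
      (fun m => ∀ i ∈ B, m i = 0) (fun m => (monomial m (coeff m f) : MvPolynomial (Fin n) k))
    rw [support_sum_monomial_coeff f] at hsplit
    set g := ∑ m ∈ f.support.filter (fun m => ∀ i ∈ B, m i = 0),
      (monomial m (coeff m f) : MvPolynomial (Fin n) k) with hg
    set h := ∑ m ∈ f.support.filter (fun m => ¬ ∀ i ∈ B, m i = 0),
      (monomial m (coeff m f) : MvPolynomial (Fin n) k) with hh
    have hmem : h ∈ Ideal.span (X '' B) := by
      refine Ideal.sum_mem _ fun m hm => ?_
      rw [Finset.mem_filter] at hm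
      rw [mem_ideal_span_X_image]
      intro m' hm'
      rcases Finset.mem_singleton.mp (Finset.mem_of_subset support_monomial_subset hm') with rfl
      push_neg at hm
      obtain ⟨i, hiB, hmi⟩ := hm.2
      exact ⟨i, hiB, hmi⟩
    have hkg : killMap k n B g = g := by
      rw [hg, map_sum]
      exact Finset.sum_congr rfl fun m hm =>
        killMap_monomial_of_avoid B m _ (Finset.mem_filter.mp hm).2
    have hkh : killMap k n B h = 0 := by
      rw [hh, map_sum]
      refine Finset.sum_eq_zero fun m hm => ?_
      rw [Finset.mem_filter] at hm
      push_neg at hm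
      obtain ⟨i, hiB, hmi⟩ := hm.2
      exact killMap_monomial_of_touch B m _ i hiB hmi
    have hthis : killMap k n B f = g := by
      rw [← hsplit, map_add, hkg, hkh, add_zero]
    have hg0 : g = 0 := by rw [← hthis, hf]
    have hfh : f = h := by rw [← hsplit, hg0, zero_add]
    rw [hfh]; exact hmem
  · rw [Ideal.span_le]
    rintro _ ⟨i, hiB, rfl⟩
    have : killMap k n B (X i) = 0 := by
      rw [killMap_X]; simp [hiB]
    exact this
lemma isPrime_span_X_image (B : Set (Fin n)) :
    (Ideal.span (X '' B) : Ideal (MvPolynomial (Fin n) k)).IsPrime := by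
  rw [← ker_killMap]
  exact RingHom.ker_isPrime _

lemma X_mem_span_X_image_iff (B : Set (Fin n)) (i : Fin n) :
    (X i : MvPolynomial (Fin n) k) ∈ Ideal.span (X '' B) ↔ i ∈ B := by
  classical
  constructor
  · intro h
    rw [mem_ideal_span_X_image] at h
    obtain ⟨j, hjB, hj⟩ := h (Finsupp.single i 1) (by rw [support_X]; simp)
    obtain ⟨rfl, -⟩ := Finsupp.single_apply_ne_zero.mp hj
    exact hjB
  · intro h; exact Ideal.subset_span ⟨i, h, rfl⟩

variable {k : Type} [Field k]

/-- Horner induction: evaluating a polynomial at `g` with coefficients `aeval yb`,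
if result is 0 then polynomial is 0, given `yb` alg. indep. mod a prime containing `g ≠ 0`. -/
lemma poly_eval_zero {B : Type*} [CommRing B] [IsDomain B] [Algebra k B]
    {q' : Ideal B} [q'.IsPrime] {d : ℕ} {yb : Fin d → B}
    (hy : AlgebraicIndependent k (fun i => Ideal.Quotient.mk q' (yb i)))
    {g : B} (hg : g ∈ q') (hg0 : g ≠ 0) :
    ∀ (N : ℕ) (Q : Polynomial (MvPolynomial (Fin d) k)), Q.natDegree ≤ N →
      Polynomial.eval₂ ((aeval yb : MvPolynomial (Fin d) k →ₐ[k] B) : _ →+* B) g Q = 0 →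
      Q = 0 := by
  have key : ∀ c : MvPolynomial (Fin d) k, aeval yb c ∈ q' → c = 0 := by
    intro c hc
    have h1 : aeval (fun i => Ideal.Quotient.mk q' (yb i)) c = 0 := by
      have h2 := MvPolynomial.comp_aeval_apply (f := yb) (Ideal.Quotient.mkₐ k q') c
      simp only [Ideal.Quotient.mkₐ_eq_mk] at h2
      rw [← h2, Ideal.Quotient.eq_zero_iff_mem]
      exact hc
    exact hy.eq_zero_of_aeval_eq_zero c h1
  intro N
  induction N with
  | zero =>
    intro Q hQ h
    have hQC : Q = Polynomial.C (Q.coeff 0) := Polynomial.eq_C_of_natDegree_le_zero hQ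
    rw [hQC, Polynomial.eval₂_C] at h
    have : (Q.coeff 0 : MvPolynomial (Fin d) k) = 0 := key _ (h ▸ q'.zero_mem)
    rw [hQC, this, map_zero]
  | succ N ih =>
    intro Q hQ h
    have hdecomp := Polynomial.divX_mul_X_add Q
    rw [← hdecomp, Polynomial.eval₂_add, Polynomial.eval₂_mul, Polynomial.eval₂_X,
      Polynomial.eval₂_C] at h
    set E := Polynomial.eval₂ ((aeval yb : MvPolynomial (Fin d) k →ₐ[k] B) : _ →+* B) g Q.divX
      with hE
    have hc0 : aeval yb (Q.coeff 0) ∈ q' := by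
      have h3 : ((aeval yb : MvPolynomial (Fin d) k →ₐ[k] B) : _ →+* B) (Q.coeff 0) = -(E * g) :=
        eq_neg_of_add_eq_zero_right h
      show ((aeval yb : MvPolynomial (Fin d) k →ₐ[k] B) : _ →+* B) (Q.coeff 0) ∈ q'
      rw [h3]; exact neg_mem (Ideal.mul_mem_left _ _ hg)
    have hc0' : Q.coeff 0 = 0 := key _ hc0
    rw [hc0', map_zero, add_zero] at h
    have hE0 : E = 0 := by
      rcases mul_eq_zero.mp h with h' | h'
      · exact h'
      · exact absurd h' hg0
    have hdiv : Q.divX = 0 := by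
      refine ih Q.divX ?_ hE0
      have := Polynomial.natDegree_divX_eq_natDegree_tsub_one (p := Q)
      omega
    rw [← hdecomp, hdiv, hc0', map_zero, zero_mul, zero_add]

lemma aeval_cons_eq_eval₂ {B : Type*} [CommRing B] [Algebra k B] (g : B) {d : ℕ}
    (yb : Fin d → B) (P : MvPolynomial (Fin (d + 1)) k) :
    aeval (Fin.cons g yb : Fin (d + 1) → B) P =
      Polynomial.eval₂ ((aeval yb : MvPolynomial (Fin d) k →ₐ[k] B) : _ →+* B) g
        (finSuccEquiv k d P) := by
  have hcomp : ((Polynomial.eval₂RingHom ((aeval yb : MvPolynomial (Fin d) k →ₐ[k] B) : _ →+* B)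
        g).comp
      (finSuccEquiv k d).toAlgHom.toRingHom)
      = ((aeval (Fin.cons g yb : Fin (d + 1) → B) : MvPolynomial (Fin (d + 1)) k →ₐ[k] B) :
          MvPolynomial (Fin (d + 1)) k →+* B) := by
    apply MvPolynomial.ringHom_ext
    · intro c
      simp [finSuccEquiv_apply]
    · intro i
      refine Fin.cases ?_ ?_ i
      · simp [finSuccEquiv_X_zero]
      · intro j
        simp [finSuccEquiv_X_succ]
  have := RingHom.congr_fun hcomp P
  simpa using this.symm

lemma crux {A : Type*} [CommRing A] [Algebra k A] {p q : Ideal A}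
    [hp : p.IsPrime] [hq : q.IsPrime] (hpq : p ≤ q) {d : ℕ} {y : Fin d → A}
    (hy : AlgebraicIndependent k (fun i => Ideal.Quotient.mk q (y i)))
    {f : A} (hfq : f ∈ q) (hfp : f ∉ p) :
    AlgebraicIndependent k (fun i => Ideal.Quotient.mk p ((Fin.cons f y : Fin (d + 1) → A) i)) := by
  classical
  set q' : Ideal (A ⧸ p) := q.map (Ideal.Quotient.mk p) with hq'def
  haveI hq'p : q'.IsPrime := Ideal.map_isPrime_of_surjective Ideal.Quotient.mk_surjective
      (by rw [Ideal.mk_ker]; exact hpq)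
  set yb : Fin d → A ⧸ p := fun i => Ideal.Quotient.mk p (y i) with hybdef
  set g : A ⧸ p := Ideal.Quotient.mk p f with hgdef
  have hgq' : g ∈ q' := Ideal.mem_map_of_mem _ hfq
  have hg0 : g ≠ 0 := fun h0 => hfp (Ideal.Quotient.eq_zero_iff_mem.mp h0)
  have hyb : AlgebraicIndependent k (fun i => Ideal.Quotient.mk q' (yb i)) := by
    refine AlgebraicIndependent.of_comp (DoubleQuot.quotQuotEquivQuotOfLEₐ k hpq).toAlgHom ?_
    have hfun : (⇑(DoubleQuot.quotQuotEquivQuotOfLEₐ k hpq).toAlgHom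
          ∘ fun i => Ideal.Quotient.mk q' (yb i))
        = fun i => Ideal.Quotient.mk q (y i) := by
      funext i
      exact DoubleQuot.quotQuotEquivQuotOfLE_quotQuotMk (y i) hpq
    convert hy using 1
    exact hfun
  rw [algebraicIndependent_iff]
  intro P hP
  have hPc : aeval (Fin.cons g yb : Fin (d + 1) → A ⧸ p) P = 0 := by
    have hcons : (Fin.cons g yb : Fin (d + 1) → A ⧸ p)
        = fun i => Ideal.Quotient.mk p ((Fin.cons f y : Fin (d + 1) → A) i) := by
      funext i
      refine Fin.cases rfl (fun j => rfl) i
    rw [hcons]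
    exact hP
  rw [aeval_cons_eq_eval₂] at hPc
  have hQ0 := poly_eval_zero hyb hgq' hg0 (finSuccEquiv k d P).natDegree
    (finSuccEquiv k d P) le_rfl hPc
  have : P = 0 := by
    have := congrArg (finSuccEquiv k d).symm (hQ0)
    simpa using this
  exact this

lemma chain_algIndep {A : Type*} [CommRing A] [Algebra k A] :
    ∀ (N : ℕ) (p : Fin (N + 1) → Ideal A), (∀ i, (p i).IsPrime) →
      (∀ i j : Fin (N + 1), i < j → p i < p j) →
      ∃ z : Fin N → A, AlgebraicIndependent k (fun j => Ideal.Quotient.mk (p 0) (z j)) := by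
  intro N
  induction N with
  | zero =>
    intro p hprime _
    haveI := hprime 0
    haveI : Nontrivial (A ⧸ p 0) := Ideal.Quotient.nontrivial_iff.mpr (hprime 0).ne_top
    exact ⟨finZeroElim, algebraicIndependent_empty_type⟩
  | succ N ih =>
    intro p hprime hmono
    obtain ⟨z', hz'⟩ := ih (p ∘ Fin.succ) (fun i => hprime i.succ)
      (fun i j hij => hmono i.succ j.succ (by simpa using hij))
    haveI := hprime 0
    haveI := hprime 1
    have h01 : p 0 < p 1 := hmono 0 1 (by norm_num)
    obtain ⟨f, hfq, hfp⟩ := SetLike.exists_of_lt h01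
    have hz'' : AlgebraicIndependent k (fun i => Ideal.Quotient.mk (p 1) (z' i)) := by
      have : (p ∘ Fin.succ) 0 = p 1 := by norm_num
      rwa [this] at hz'
    exact ⟨Fin.cons f z', crux h01.le hz'' hfq hfp⟩

variable {k : Type} [Field k]

lemma arith_contra (n D : ℕ) (H : ∀ e : ℕ, (e + 1) ^ (n + 1) ≤ ((n + 1) * e * D + 1) ^ n) :
    False := by
  set C := (n + 1) * D with hC
  set e := (C + 1) ^ n + 1 with he
  have he1 : 1 ≤ e := Nat.le_add_left 1 _
  have h1 : (n + 1) * e * D + 1 ≤ (C + 1) * e := by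
    have : (n + 1) * e * D = C * e := by ring
    rw [this]; nlinarith
  have h2 : (e + 1) ^ (n + 1) ≤ ((C + 1) * e) ^ n :=
    (H e).trans (Nat.pow_le_pow_left h1 n)
  have h3 : e ^ (n + 1) ≤ (C + 1) ^ n * e ^ n := by
    calc e ^ (n + 1) ≤ (e + 1) ^ (n + 1) := Nat.pow_le_pow_left (by omega) _
      _ ≤ ((C + 1) * e) ^ n := h2
      _ = (C + 1) ^ n * e ^ n := by rw [mul_pow]
  have h4 : e ^ n * e ≤ e ^ n * (C + 1) ^ n := by
    rw [pow_succ] at h3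
    calc e ^ n * e ≤ (C + 1) ^ n * e ^ n := h3
      _ = e ^ n * (C + 1) ^ n := by ring
  have h5 : e ≤ (C + 1) ^ n := Nat.le_of_mul_le_mul_left h4 (by positivity)
  omega

lemma no_algindep_succ {n : ℕ} (z : Fin (n + 1) → MvPolynomial (Fin n) k) :
    ¬ AlgebraicIndependent k z := by
  classical
  intro hz
  set D : ℕ := (Finset.univ.sup fun i => (z i).totalDegree) + 1 with hD
  have hDi : ∀ i, (z i).totalDegree ≤ D := by
    intro i
    rw [hD]
    exact Nat.le_succ_of_le (Finset.le_sup (f := fun i => (z i).totalDegree) (Finset.mem_univ i))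
  have hinj : Function.Injective (aeval z : MvPolynomial (Fin (n + 1)) k →ₐ[k] MvPolynomial (Fin n) k) :=
    algebraicIndependent_iff_injective_aeval.mp hz
  refine arith_contra n D fun e => ?_
  -- the family of monomials
  set ψ : (Fin (n + 1) → Fin (e + 1)) → (Fin (n + 1) →₀ ℕ) :=
    fun a => Finsupp.equivFunOnFinite.symm (fun i => (a i : ℕ)) with hψ
  have hψinj : Function.Injective ψ := by
    intro a b hab
    have := Finsupp.equivFunOnFinite.symm.injective hab
    funext i
    exact Fin.val_injective (congrFun this i)
  set u : (Fin (n + 1) → Fin (e + 1)) → MvPolynomial (Fin (n + 1)) k :=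
    fun a => monomial (ψ a) 1 with hu
  have hulin : LinearIndependent k u := by
    have hb := (MvPolynomial.basisMonomials (Fin (n + 1)) k).linearIndependent
    have := hb.comp ψ hψinj
    have hcoe : (⇑(MvPolynomial.basisMonomials (Fin (n + 1)) k) ∘ ψ) = u := by
      funext a
      rw [Function.comp_apply, MvPolynomial.coe_basisMonomials]
    rwa [hcoe] at this
  set v : (Fin (n + 1) → Fin (e + 1)) → MvPolynomial (Fin n) k :=
    fun a => aeval z (u a) with hv
  have hvlin : LinearIndependent k v := by
    have := hulin.map' (aeval z : MvPolynomial (Fin (n + 1)) k →ₐ[k] MvPolynomial (Fin n) k).toLinearMap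
      (LinearMap.ker_eq_bot.mpr hinj)
    exact this
  set M := (n + 1) * e * D with hM
  have hvdeg : ∀ a, (v a).totalDegree ≤ M := by
    intro a
    rw [hv]
    simp only [hu, aeval_monomial, map_one, one_mul]
    calc ((ψ a).prod fun i d => z i ^ d).totalDegree
        ≤ ∑ i ∈ (ψ a).support, (z i ^ (ψ a) i).totalDegree :=
          MvPolynomial.totalDegree_finset_prod _ _
      _ ≤ ∑ i ∈ (ψ a).support, e * D := by
          refine Finset.sum_le_sum fun i _ => ?_
          calc (z i ^ (ψ a) i).totalDegree ≤ (ψ a) i * (z i).totalDegree :=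
                MvPolynomial.totalDegree_pow _ _
            _ ≤ e * D := by
                have h1 : (ψ a) i ≤ e := by
                  have h2 : (ψ a) i = (a i : ℕ) := rfl
                  rw [h2]
                  exact Nat.lt_succ_iff.mp (a i).2
                exact Nat.mul_le_mul h1 (hDi i)
      _ ≤ (n + 1) * (e * D) := by
          refine le_trans (Finset.sum_le_card_nsmul _ _ (e * D) fun i _ => le_rfl) ?_
          simp only [smul_eq_mul]
          exact Nat.mul_le_mul_right _ (le_trans (Finset.card_le_univ _) (by simp))
      _ = M := by rw [hM]; ring
  -- spanning set
  set w : (Fin n → Fin (M + 1)) → MvPolynomial (Fin n) k :=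
    fun b => monomial (Finsupp.equivFunOnFinite.symm (fun i => (b i : ℕ))) 1 with hw
  set W : Submodule k (MvPolynomial (Fin n) k) := Submodule.span k (Set.range w) with hW
  have hmemW : ∀ f : MvPolynomial (Fin n) k, f.totalDegree ≤ M → f ∈ W := by
    intro f hf
    rw [← support_sum_monomial_coeff f]
    refine Submodule.sum_mem _ fun m hm => ?_
    have hmle : ∀ i, m i ≤ M := by
      intro i
      by_cases h0 : m i = 0
      · omega
      · have hi : i ∈ m.support := Finsupp.mem_support_iff.mpr h0
        have h1 : m i ≤ m.sum fun _ e => e := by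
          rw [Finsupp.sum]
          exact Finset.single_le_sum (fun j _ => Nat.zero_le _) hi
        have h2 := MvPolynomial.le_totalDegree (p := f) hm
        omega
    have hmono : monomial m (coeff m f) = (coeff m f) • monomial m (1 : k) := by
      rw [MvPolynomial.smul_monomial, smul_eq_mul, mul_one]
    rw [hmono]
    refine Submodule.smul_mem _ _ (Submodule.subset_span ?_)
    have hkey : Finsupp.equivFunOnFinite.symm
        (fun i => ((⟨m i, Nat.lt_succ_of_le (hmle i)⟩ : Fin (M + 1)) : ℕ)) = m := by
      apply Finsupp.equivFunOnFinite.symm_apply_eq.mpr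
      funext i
      rfl
    exact ⟨fun i => ⟨m i, Nat.lt_succ_of_le (hmle i)⟩,
      by rw [hw]; exact congrArg (fun s => monomial s (1 : k)) hkey⟩
  haveI : Module.Finite k W := by
    rw [hW]
    exact Module.Finite.span_of_finite k (Set.finite_range w)
  have hrank : Module.finrank k W ≤ (M + 1) ^ n := by
    have h1 : Module.finrank k W ≤ (Set.range w).toFinset.card := by
      rw [hW]
      exact finrank_span_le_card _
    refine le_trans h1 ?_
    have h2 : (Set.range w).toFinset.card ≤ Fintype.card (Fin n → Fin (M + 1)) := by
      rw [Set.toFinset_card]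
      exact Fintype.card_range_le w
    refine le_trans h2 ?_
    rw [Fintype.card_fun]
    simp
  -- restrict v to W
  have hvW : ∀ a, v a ∈ W := fun a => hmemW _ (hvdeg a)
  set v' : (Fin (n + 1) → Fin (e + 1)) → W := fun a => ⟨v a, hvW a⟩ with hv'
  have hv'lin : LinearIndependent k v' := by
    refine LinearIndependent.of_comp W.subtype ?_
    have : (⇑W.subtype ∘ v') = v := rfl
    rwa [this]
  have hcard := hv'lin.fintype_card_le_finrank
  rw [Fintype.card_fun] at hcard
  simp only [Fintype.card_fin] at hcard
  calc (e + 1) ^ (n + 1) ≤ Module.finrank k W := hcard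
    _ ≤ (M + 1) ^ n := hrank
    _ = ((n + 1) * e * D + 1) ^ n := by rw [hM]

lemma algindep_le {n N : ℕ} (z : Fin N → MvPolynomial (Fin n) k)
    (hz : AlgebraicIndependent k z) : N ≤ n := by
  by_contra hlt
  push_neg at hlt
  have hle : n + 1 ≤ N := hlt
  have := hz.comp (Fin.castLE hle) (Fin.castLE_injective hle)
  exact no_algindep_succ _ this

lemma nat_div_lt_div {i n t : ℕ} (ht : 1 ≤ t) (hin : i < n) (hmod : i % t = t - 1) :
    i / t < n / t := by
  by_contra h
  push_neg at h
  have h1 := Nat.div_add_mod i t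
  have h2 := Nat.div_add_mod n t
  have h3 : n % t < t := Nat.mod_lt _ (by omega)
  have h4 : t * (n / t) ≤ t * (i / t) := Nat.mul_le_mul_left _ h
  set A := t * (i / t) with hA
  clear_value A
  set B := t * (n / t) with hB
  clear_value B
  omega

lemma cover_idx {i t n : ℕ} (ht : 2 ≤ t) (h : i + t ≤ n) :
    (i + (t - 1 - i % t)) % t = t - 1 := by
  have h1 := Nat.div_add_mod i t
  have h2 : i % t < t := Nat.mod_lt _ (by omega)
  have h3 : i + (t - 1 - i % t) = t * (i / t) + (t - 1) := by
    set A := t * (i / t) with hA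
    clear_value A
    omega
  rw [h3, Nat.mul_add_mod]
  exact Nat.mod_eq_of_lt (by omega)

lemma lower_bound (k : Type) [Field k] (n t : ℕ) (ht : 2 ≤ t) (htn : t ≤ n) :
    ((n - n / t : ℕ) : WithBot ℕ∞)
      ≤ ringKrullDim (MvPolynomial (Fin n) k ⧸ chainPathIdeal k n t) := by
  classical
  set c := n / t with hc
  set m := n - c with hm
  set CovF : Finset (Fin n) := Finset.univ.filter (fun i => (i : ℕ) % t = t - 1) with hCovF
  have hCovCard : CovF.card ≤ c := by
    have hmaps : ∀ i ∈ CovF, (i : ℕ) / t ∈ Finset.range c := by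
      intro i hi
      rw [Finset.mem_range]
      rw [hCovF, Finset.mem_filter] at hi
      exact nat_div_lt_div (by omega) i.2 hi.2
    have hcard := Finset.card_le_card_of_injOn (s := CovF) (t := Finset.range c)
      (fun (i : Fin n) => (i : ℕ) / t) hmaps ?inj
    · rwa [Finset.card_range] at hcard
    case inj =>
      intro a ha b hb hab
      have ha2 : (a : ℕ) % t = t - 1 := by
        have h := ha
        rw [hCovF] at h
        simp only [Finset.mem_coe, Finset.mem_filter] at h
        exact h.2
      have hb2 : (b : ℕ) % t = t - 1 := by
        have h := hb
        rw [hCovF] at h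
        simp only [Finset.mem_coe, Finset.mem_filter] at h
        exact h.2
      simp only at hab
      have h1 := Nat.div_add_mod (a : ℕ) t
      have h2 := Nat.div_add_mod (b : ℕ) t
      have hv : (a : ℕ) = (b : ℕ) := by
        rw [ha2] at h1
        rw [hb2] at h2
        rw [hab] at h1
        omega
      exact Fin.val_injective hv
  have hfree : m ≤ CovFᶜ.card := by
    rw [Finset.card_compl]
    simp only [Fintype.card_fin]
    omega
  obtain ⟨emb⟩ : Nonempty (Fin m ↪ {x // x ∈ CovFᶜ}) := by
    rw [Function.Embedding.nonempty_iff_card_le, Fintype.card_coe, Fintype.card_fin]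
    exact hfree
  set gfun : Fin m → Fin n := fun j => (emb j : Fin n) with hgfun
  have hginj : Function.Injective gfun := fun a b hab => emb.injective (Subtype.ext hab)
  have hgnotcov : ∀ j, ¬ ((gfun j : ℕ) % t = t - 1) := by
    intro j h
    have h2 := (emb j).2
    rw [Finset.mem_compl] at h2
    exact h2 (Finset.mem_filter.mpr ⟨Finset.mem_univ _, h⟩)
  set B : ℕ → Set (Fin n) := fun j =>
    {i : Fin n | (i : ℕ) % t = t - 1} ∪ (gfun '' {a : Fin m | (a : ℕ) < j}) with hB
  set Q : Fin (m + 1) → Ideal (MvPolynomial (Fin n) k) :=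
    fun j => Ideal.span (X '' B j.1) with hQ
  have hQprime : ∀ j, (Q j).IsPrime := fun j => isPrime_span_X_image _
  have hBmono : ∀ {a b : ℕ}, a ≤ b → B a ⊆ B b := by
    intro a b hab x hx
    rcases hx with h | ⟨y, hy, rfl⟩
    · exact Or.inl h
    · exact Or.inr ⟨y, by simp only [Set.mem_setOf_eq] at hy ⊢; omega, rfl⟩
  have hQlt : ∀ a b : Fin (m + 1), a < b → Q a < Q b := by
    intro a b hab
    have hle : Q a ≤ Q b := Ideal.span_mono (Set.image_mono (hBmono (by omega)))
    refine lt_of_le_of_ne hle ?_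
    intro heq
    have ha : (a : ℕ) < m := by omega
    have hxb : gfun ⟨a, ha⟩ ∈ B b.1 := Or.inr ⟨⟨a, ha⟩, by simp only [Set.mem_setOf_eq]; omega, rfl⟩
    have hxa : gfun ⟨a, ha⟩ ∉ B a.1 := by
      rintro (h | ⟨y, hy, hxy⟩)
      · exact hgnotcov _ h
      · have hya := hginj hxy
        simp only [Set.mem_setOf_eq] at hy
        rw [hya] at hy
        simp at hy
    have h1 : (X (gfun ⟨a, ha⟩) : MvPolynomial (Fin n) k) ∈ Q b :=
      (X_mem_span_X_image_iff _ _).mpr hxb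
    rw [← heq] at h1
    exact hxa ((X_mem_span_X_image_iff _ _).mp h1)
  have hIQ : ∀ j, chainPathIdeal k n t ≤ Q j := by
    intro j
    rw [chainPathIdeal, Ideal.span_le]
    rintro f ⟨i, hitn, rfl⟩
    have hmodt : i % t < t := Nat.mod_lt _ (by omega)
    have hdt : t - 1 - i % t < t := by omega
    have hidx : (i + (t - 1 - i % t)) % t = t - 1 := cover_idx ht hitn
    have hfac := Finset.dvd_prod_of_mem
      (fun jj : Fin t => (X (⟨i + jj.1, Nat.lt_of_lt_of_le (Nat.add_lt_add_left jj.2 i) hitn⟩ :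
        Fin n) : MvPolynomial (Fin n) k)) (Finset.mem_univ (⟨t - 1 - i % t, hdt⟩ : Fin t))
    obtain ⟨cc, hcc⟩ := hfac
    rw [SetLike.mem_coe, hcc]
    refine Ideal.mul_mem_right _ _ ?_
    refine (X_mem_span_X_image_iff _ _).mpr ?_
    exact Or.inl hidx
  set mkq := Ideal.Quotient.mk (chainPathIdeal k n t) with hmkq
  have hker : RingHom.ker mkq = chainPathIdeal k n t := Ideal.mk_ker
  have hPprime : ∀ j, (Ideal.map mkq (Q j)).IsPrime := fun j =>
    Ideal.map_isPrime_of_surjective Ideal.Quotient.mk_surjective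
      (by rw [hker]; exact hIQ j)
  set Pfun : Fin (m + 1) → PrimeSpectrum (MvPolynomial (Fin n) k ⧸ chainPathIdeal k n t) :=
    fun j => ⟨Ideal.map mkq (Q j), hPprime j⟩ with hPfun
  have hcomapmap : ∀ j, Ideal.comap mkq (Ideal.map mkq (Q j)) = Q j := by
    intro j
    rw [Ideal.comap_map_of_surjective mkq Ideal.Quotient.mk_surjective]
    refine sup_eq_left.mpr ?_
    have hbot : Ideal.comap mkq ⊥ = chainPathIdeal k n t := by
      rw [← RingHom.ker_eq_comap_bot, hker]
    rw [hbot]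
    exact hIQ j
  have hPlt : ∀ i : Fin m, Pfun i.castSucc < Pfun i.succ := by
    intro i
    rw [← PrimeSpectrum.asIdeal_lt_asIdeal]
    have hlt := hQlt i.castSucc i.succ Fin.castSucc_lt_succ
    refine lt_of_le_of_ne (Ideal.map_mono hlt.le) ?_
    intro heq
    have hcomap := congrArg (Ideal.comap mkq) heq
    rw [hcomapmap, hcomapmap] at hcomap
    exact hlt.ne hcomap
  have hlen := Order.LTSeries.length_le_krullDim (⟨m, Pfun, hPlt⟩ :
    LTSeries (PrimeSpectrum (MvPolynomial (Fin n) k ⧸ chainPathIdeal k n t)))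
  exact hlen

lemma upper_bound (k : Type) [Field k] (n t : ℕ) (ht : 2 ≤ t) (htn : t ≤ n) :
    ringKrullDim (MvPolynomial (Fin n) k ⧸ chainPathIdeal k n t)
      ≤ ((n - n / t : ℕ) : WithBot ℕ∞) := by
  classical
  set c := n / t with hc
  have hc1 : 1 ≤ c := (Nat.one_le_div_iff (by omega)).mpr htn
  unfold ringKrullDim Order.krullDim
  refine iSup_le fun pser => ?_
  set r := pser.length with hr
  have hcr : c + r ≤ n := by
    -- build the chain in MvPolynomial
    set mkq := Ideal.Quotient.mk (chainPathIdeal k n t) with hmkq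
    set qS : Fin (r + 1) → Ideal (MvPolynomial (Fin n) k) :=
      fun j => Ideal.comap mkq (pser.toFun j).asIdeal with hqS
    haveI hqSprime : ∀ j, (qS j).IsPrime := fun j => Ideal.IsPrime.comap _
    have hIqS : ∀ j, chainPathIdeal k n t ≤ qS j := by
      intro j x hx
      show mkq x ∈ (pser.toFun j).asIdeal
      have : mkq x = 0 := Ideal.Quotient.eq_zero_iff_mem.mpr hx
      rw [this]
      exact (pser.toFun j).asIdeal.zero_mem
    have hqSlt : ∀ a b : Fin (r + 1), a < b → qS a < qS b := by
      intro a b hab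
      have h1 : pser.toFun a < pser.toFun b := pser.strictMono hab
      have h1' : (pser.toFun a).asIdeal < (pser.toFun b).asIdeal :=
        (PrimeSpectrum.asIdeal_lt_asIdeal _ _).mpr h1
      refine lt_of_le_of_ne (Ideal.comap_mono h1'.le) ?_
      intro heq
      have h2 := congrArg (Ideal.map mkq) heq
      rw [Ideal.map_comap_of_surjective mkq Ideal.Quotient.mk_surjective,
        Ideal.map_comap_of_surjective mkq Ideal.Quotient.mk_surjective] at h2
      exact h1'.ne h2
    have hqSle : ∀ a b : Fin (r + 1), a ≤ b → qS a ≤ qS b := by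
      intro a b hab
      rcases eq_or_lt_of_le hab with rfl | h
      · exact le_rfl
      · exact (hqSlt a b h).le
    -- choose a variable of q0 in each window
    have hweb : ∀ a : Fin c, a.1 * t + t ≤ n := by
      intro a
      have h1 : (a.1 + 1) * t ≤ c * t := Nat.mul_le_mul_right t a.2
      have h2 : c * t ≤ n := by rw [hc]; exact Nat.div_mul_le_self n t
      calc a.1 * t + t = (a.1 + 1) * t := by ring
        _ ≤ n := le_trans h1 h2
    have hwex : ∀ a : Fin c, ∃ jj : Fin t,
        (X (⟨a.1 * t + jj.1, Nat.lt_of_lt_of_le (Nat.add_lt_add_left jj.2 (a.1 * t)) (hweb a)⟩ :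
          Fin n) : MvPolynomial (Fin n) k) ∈ qS 0 := by
      intro a
      have hgen : (∏ jj : Fin t,
          (X (⟨a.1 * t + jj.1, Nat.lt_of_lt_of_le (Nat.add_lt_add_left jj.2 (a.1 * t)) (hweb a)⟩ :
            Fin n) : MvPolynomial (Fin n) k)) ∈ chainPathIdeal k n t :=
        Ideal.subset_span ⟨a.1 * t, hweb a, rfl⟩
      have hq0 := hIqS 0 hgen
      obtain ⟨jj, _, hjj⟩ := (Ideal.IsPrime.prod_mem_iff.mp hq0)
      exact ⟨jj, hjj⟩
    choose wj hwj using hwex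
    set w : Fin c → Fin n := fun a =>
      ⟨a.1 * t + (wj a).1, Nat.lt_of_lt_of_le (Nat.add_lt_add_left (wj a).2 (a.1 * t)) (hweb a)⟩
      with hwdef
    have hwmem : ∀ a, (X (w a) : MvPolynomial (Fin n) k) ∈ qS 0 := fun a => hwj a
    have hwlt : ∀ a b : Fin c, a < b → (w a : ℕ) < (w b : ℕ) := by
      intro a b hab
      have h1 : (a.1 + 1) * t ≤ b.1 * t := Nat.mul_le_mul_right t hab
      have h2 : (w a : ℕ) < (a.1 + 1) * t := by
        have := (wj a).2
        simp only [hwdef]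
        calc a.1 * t + (wj a).1 < a.1 * t + t := by omega
          _ = (a.1 + 1) * t := by ring
      have h3 : b.1 * t ≤ (w b : ℕ) := by simp only [hwdef]; omega
      omega
    have hwinj : Function.Injective w := by
      intro a b hab
      rcases lt_trichotomy a b with h | h | h
      · exact absurd (congrArg (fun x : Fin n => (x : ℕ)) hab) (Nat.ne_of_lt (hwlt a b h))
      · exact h
      · exact absurd (congrArg (fun x : Fin n => (x : ℕ)) hab).symm (Nat.ne_of_lt (hwlt b a h))
    set RI : ℕ → Ideal (MvPolynomial (Fin n) k) :=
      fun j => Ideal.span (X '' (w '' {a : Fin c | (a : ℕ) < j})) with hRI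
    have hRIprime : ∀ j, (RI j).IsPrime := fun j => isPrime_span_X_image _
    have hRIle : ∀ j, RI j ≤ qS 0 := by
      intro j
      rw [hRI, Ideal.span_le]
      rintro f ⟨x, ⟨a, _, rfl⟩, rfl⟩
      exact hwmem a
    have hXRI : ∀ (j : ℕ) (a : Fin c), (X (w a) : MvPolynomial (Fin n) k) ∈ RI j ↔ (a : ℕ) < j := by
      intro j a
      rw [hRI, X_mem_span_X_image_iff]
      constructor
      · rintro ⟨b, hb, hba⟩
        have := hwinj hba
        rw [← this]
        exact hb
      · intro h
        exact ⟨a, h, rfl⟩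
    have hRIlt : ∀ a b : ℕ, a < b → b ≤ c → RI a < RI b := by
      intro a b hab hbc
      have hle : RI a ≤ RI b := Ideal.span_mono (Set.image_mono (Set.image_mono
        (fun x hx => by simp only [Set.mem_setOf_eq] at hx ⊢; omega)))
      refine lt_of_le_of_ne hle ?_
      intro heq
      have ha : a < c := by omega
      have h1 : (X (w ⟨a, ha⟩) : MvPolynomial (Fin n) k) ∈ RI b := (hXRI b ⟨a, ha⟩).mpr hab
      rw [← heq] at h1
      have h2 := (hXRI a ⟨a, ha⟩).mp h1
      exact absurd h2 (lt_irrefl a)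
    -- combined chain
    set CC : Fin (c + r + 1) → Ideal (MvPolynomial (Fin n) k) :=
      fun j => if h : j.1 < c then RI j.1 else qS ⟨j.1 - c, by omega⟩ with hCC
    have hCCeq : ∀ j : Fin (c + r + 1),
        CC j = if h : j.1 < c then RI j.1 else qS ⟨j.1 - c, by omega⟩ := fun j => rfl
    have hCCprime : ∀ j, (CC j).IsPrime := by
      intro j
      rw [hCCeq]
      by_cases h : j.1 < c
      · rw [dif_pos h]; exact hRIprime _
      · rw [dif_neg h]; exact hqSprime _
    have hCClt : ∀ a b : Fin (c + r + 1), a < b → CC a < CC b := by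
      intro a b hab
      rw [hCCeq a, hCCeq b]
      by_cases hb : b.1 < c
      · have ha : a.1 < c := by omega
        rw [dif_pos ha, dif_pos hb]
        exact hRIlt a.1 b.1 hab (by omega)
      · by_cases ha : a.1 < c
        · rw [dif_pos ha, dif_neg hb]
          have hle : RI a.1 ≤ qS ⟨b.1 - c, by omega⟩ :=
            le_trans (hRIle a.1) (hqSle 0 _ (Fin.zero_le _))
          refine lt_of_le_of_ne hle ?_
          intro heq
          have h1 : (X (w ⟨a.1, ha⟩) : MvPolynomial (Fin n) k) ∈ qS ⟨b.1 - c, by omega⟩ :=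
            hqSle 0 _ (Fin.zero_le _) (hwmem ⟨a.1, ha⟩)
          rw [← heq] at h1
          have h2 := (hXRI a.1 ⟨a.1, ha⟩).mp h1
          exact absurd h2 (lt_irrefl _)
        · rw [dif_neg ha, dif_neg hb]
          refine hqSlt _ _ ?_
          simp only [Fin.mk_lt_mk]
          omega
    obtain ⟨z, hz⟩ := chain_algIndep (k := k) (c + r) CC hCCprime hCClt
    have hCC0 : CC 0 = ⊥ := by
      have h0 : (0 : Fin (c + r + 1)).1 < c := by simp only [Fin.val_zero]; omega
      have hempty : {a : Fin c | (a : ℕ) < (0 : Fin (c + r + 1)).1} = ∅ := by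
        ext x
        simp
      have hRI0 : RI (0 : Fin (c + r + 1)).1 = ⊥ := by
        show Ideal.span (X '' (w '' {a : Fin c | (a : ℕ) < (0 : Fin (c + r + 1)).1})) = ⊥
        rw [hempty, Set.image_empty, Set.image_empty, Ideal.span_empty]
      rw [hCCeq, dif_pos h0]
      exact hRI0
    rw [hCC0] at hz
    have hzind : AlgebraicIndependent k z := by
      refine AlgebraicIndependent.of_comp
        (Ideal.Quotient.mkₐ k (⊥ : Ideal (MvPolynomial (Fin n) k))) ?_
      exact hz
    exact algindep_le z hzind
  have hfin : r ≤ n - c := by omega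
  exact_mod_cast hfin


/-- The Krull dimension of `S/I_t(L_n)` equals `n - ⌊n/t⌋`. -/
theorem krullDim_quot_pathIdeal_chain (k : Type) [Field k] (n t : ℕ) (ht : 2 ≤ t)
    (htn : t ≤ n) :
    ringKrullDim (MvPolynomial (Fin n) k ⧸ chainPathIdeal k n t)
      = ((n - n / t : ℕ) : WithBot ℕ∞) := by
  exact le_antisymm (upper_bound k n t ht htn) (lower_bound k n t ht htn)
end
end

section
/- Let P be a tree poset (a poset whose Hasse diagram is a tree as an undirected graph and which contains no pencil subposet). Then there exists a maximal saturated chain L in P such that either the maximal element of L or the minimal element of L belongs to no other maximal saturated chain of P. -/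
open MvPolynomial

noncomputable section
/-- A saturated chain in a poset, as a list of elements in which each element is
covered by the next. -/
def IsSatChain {P : Type*} [PartialOrder P] (l : List P) : Prop := l.Chain' (· ⋖ ·)

/-- A maximal saturated chain: a saturated chain starting at a minimal element and
ending at a maximal element. -/
def IsMaxSatChain {P : Type*} [PartialOrder P] (l : List P) : Prop :=
  IsSatChain l ∧ (∃ a, l.head? = some a ∧ IsMin a) ∧ (∃ b, l.getLast? = some b ∧ IsMax b)

/-- The path ideal `I_t(P)`: generated by the products of the vertices of all
saturated chains with `t` elements. -/
def pathIdeal (k : Type) [Field k] (P : Type) [PartialOrder P] (t : ℕ) :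
    Ideal (MvPolynomial P k) :=
  Ideal.span {f | ∃ l : List P, l.length = t ∧ IsSatChain l ∧ f = (l.map X).prod}
/-- The Hasse diagram of a poset, as an undirected simple graph. -/
def hasse (P : Type*) [PartialOrder P] : SimpleGraph P := SimpleGraph.fromRel (· ⋖ ·)

/-- A poset contains a pencil: a disjoint union `X ∪ {z} ∪ Y` with `|X|,|Y| ≥ 2`,
`x < z < y` for all `x ∈ X`, `y ∈ Y`, and `X`, `Y` antichains. -/
def HasPencil (P : Type*) [PartialOrder P] : Prop :=
  ∃ (z : P) (Xs Ys : Set P), Xs.Nontrivial ∧ Ys.Nontrivial ∧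
    (∀ x ∈ Xs, x < z) ∧ (∀ y ∈ Ys, z < y) ∧
    IsAntichain (· ≤ ·) Xs ∧ IsAntichain (· ≤ ·) Ys

/-- A tree poset: the Hasse diagram is a tree as an undirected graph and there is
no pencil subposet. -/
def IsTreePoset (P : Type*) [PartialOrder P] : Prop := (hasse P).IsTree ∧ ¬ HasPencil P

/-- A forest poset: a disjoint union of tree posets, i.e. the Hasse diagram is acyclic
and there is no pencil subposet. -/
def IsForestPoset (P : Type*) [PartialOrder P] : Prop :=
  (hasse P).IsAcyclic ∧ ¬ HasPencil P


section Aux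
variable {P : Type*} [PartialOrder P]

lemma hasse_adj {x y : P} : (hasse P).Adj x y ↔ x ≠ y ∧ (x ⋖ y ∨ y ⋖ x) := by
  simp [hasse, SimpleGraph.fromRel_adj]

variable {P : Type*} [PartialOrder P]

lemma pairwise_of_chain {l : List P} (h : l.Chain' (· ⋖ ·)) : l.Pairwise (· < ·) :=
  List.isChain_iff_pairwise.mp (h.imp fun _ _ hc => hc.1)

lemma nodup_of_chain {l : List P} (h : l.Chain' (· ⋖ ·)) : l.Nodup :=
  (pairwise_of_chain h).imp (fun h => ne_of_lt h)

lemma head_le_mem_of_chain {l : List P} (h : l.Chain' (· ⋖ ·)) {a x : P}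
    (ha : l.head? = some a) (hx : x ∈ l) : a ≤ x := by
  induction l with
  | nil => simp at hx
  | cons b t ih =>
    simp only [List.head?_cons, Option.some.injEq] at ha
    subst ha
    rcases List.mem_cons.mp hx with rfl | hx
    · rfl
    · exact le_of_lt (List.rel_of_pairwise_cons (pairwise_of_chain h) hx)

lemma mem_le_last_of_chain {l : List P} (h : l.Chain' (· ⋖ ·)) {b x : P}
    (hb : l.getLast? = some b) (hx : x ∈ l) : x ≤ b := by
  rcases List.eq_nil_or_concat l with rfl | ⟨t, c, rfl⟩
  · simp at hx
  · simp only [List.concat_eq_append] at *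
    have hc : c = b := by simpa using hb
    subst hc
    rcases (List.mem_append.mp hx) with hx | hx
    · have hp := pairwise_of_chain h
      rw [List.pairwise_append] at hp
      exact le_of_lt (hp.2.2 x hx c (by simp))
    · simp at hx; subst hx; rfl

/-- if `b` is maximal and in a saturated chain, it is the last element. -/
lemma last_eq_of_isMax {l : List P} (h : l.Chain' (· ⋖ ·)) {b : P} (hb : IsMax b)
    (hm : b ∈ l) : l.getLast? = some b := by
  rcases List.eq_nil_or_concat l with rfl | ⟨t, c, rfl⟩
  · simp at hm
  · simp only [List.concat_eq_append] at *
    have : b ≤ c := mem_le_last_of_chain h (by simp) hm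
    simp [le_antisymm this (hb this)]

lemma head_eq_of_isMin {l : List P} (h : l.Chain' (· ⋖ ·)) {a : P} (ha : IsMin a)
    (hm : a ∈ l) : l.head? = some a := by
  cases l with
  | nil => simp at hm
  | cons c t =>
    have : c ≤ a := head_le_mem_of_chain h (by simp) hm
    simp [le_antisymm (ha this) this]


lemma hasse_adj_of_covBy {x y : P} (h : x ⋖ y) : (hasse P).Adj x y :=
  hasse_adj.mpr ⟨ne_of_lt h.1, Or.inl h⟩

lemma exists_walk_of_chain : ∀ (l : List P) (a b : P), l.Chain' (· ⋖ ·) →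
    l.head? = some a → l.getLast? = some b →
    ∃ w : (hasse P).Walk a b, w.support = l
  | [], a, b => by simp
  | [x], a, b => by
    intro _ ha hb
    simp only [List.head?_cons, Option.some.injEq] at ha
    simp only [List.getLast?_singleton, Option.some.injEq] at hb
    subst ha; subst hb
    exact ⟨SimpleGraph.Walk.nil, by simp⟩
  | x :: y :: t, a, b => by
    intro hc ha hb
    simp only [List.head?_cons, Option.some.injEq] at ha
    subst ha
    obtain ⟨hxy, hc'⟩ := List.isChain_cons_cons.mp hc
    obtain ⟨w, hw⟩ := exists_walk_of_chain (y :: t) y b hc' (by simp)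
      (by simpa using hb)
    exact ⟨SimpleGraph.Walk.cons (hasse_adj_of_covBy hxy) w, by simp [hw]⟩

/-- uniqueness of saturated chains with given endpoints, under acyclicity -/
lemma chain_unique (hac : (hasse P).IsAcyclic) {l₁ l₂ : List P} {a b : P}
    (h₁ : l₁.Chain' (· ⋖ ·)) (h₂ : l₂.Chain' (· ⋖ ·))
    (ha₁ : l₁.head? = some a) (hb₁ : l₁.getLast? = some b)
    (ha₂ : l₂.head? = some a) (hb₂ : l₂.getLast? = some b) : l₁ = l₂ := by
  obtain ⟨w₁, hw₁⟩ := exists_walk_of_chain l₁ a b h₁ ha₁ hb₁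
  obtain ⟨w₂, hw₂⟩ := exists_walk_of_chain l₂ a b h₂ ha₂ hb₂
  have hp₁ : w₁.IsPath := by
    rw [SimpleGraph.Walk.isPath_def, hw₁]
    exact (pairwise_of_chain h₁).imp (fun h => ne_of_lt h)
  have hp₂ : w₂.IsPath := by
    rw [SimpleGraph.Walk.isPath_def, hw₂]
    exact (pairwise_of_chain h₂).imp (fun h => ne_of_lt h)
  have := hac.path_unique ⟨w₁, hp₁⟩ ⟨w₂, hp₂⟩
  rw [← hw₁, ← hw₂, show w₁ = w₂ from congrArg Subtype.val this]


section Graph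
variable {V : Type*} {G : SimpleGraph V}

/-- a path between two non-`v` vertices avoids the leaf `v`. -/
lemma leaf_not_mem_path {v u : V} (huniq : ∀ w, G.Adj v w → w = u)
    {x y : V} (hx : x ≠ v) (hy : y ≠ v) (p : G.Walk x y) (hp : p.IsPath) :
    v ∉ p.support := by
  classical
  intro hv
  have hspec := p.take_spec hv
  set q1 := p.takeUntil v hv with hq1
  set q2 := p.dropUntil v hv with hq2
  have hu1 : u ∈ q1.support := by
    obtain ⟨w, h, r, hq⟩ := (SimpleGraph.Walk.not_nil_iff).mp
      (SimpleGraph.Walk.not_nil_of_ne (Ne.symm hx) (p := q1.reverse))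
    have hw : w = u := huniq _ h
    have : u ∈ q1.reverse.support := by rw [hq, ← hw]; simp
    rwa [SimpleGraph.Walk.support_reverse, List.mem_reverse] at this
  have hu2 : u ∈ q2.support.tail := by
    obtain ⟨w, h, r, hq⟩ := (SimpleGraph.Walk.not_nil_iff).mp
      (SimpleGraph.Walk.not_nil_of_ne (Ne.symm hy) (p := q2))
    have hw : w = u := huniq _ h
    rw [hq, ← hw]; simp
  have hnd : (q1.append q2).support.Nodup := by
    rw [hspec]; exact hp.support_nodup
  rw [SimpleGraph.Walk.support_append] at hnd
  exact (List.disjoint_of_nodup_append hnd) hu1 hu2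
end Graph

section Fin
variable [Finite P]


lemma exists_cov_below {t v : P} (h : t < v) : ∃ c, t ≤ c ∧ c ⋖ v := by
  have : Fintype P := Fintype.ofFinite P
  classical
  obtain ⟨c, hc, hmax⟩ : ∃ c ∈ (Finset.univ.filter fun s => t ≤ s ∧ s < v), ∀ s ∈ (Finset.univ.filter fun s => t ≤ s ∧ s < v), ¬ c < s := (Finset.exists_maximal
    (s := Finset.univ.filter fun s => t ≤ s ∧ s < v) ⟨t, by simp [h]⟩).elim fun c hc => ⟨c, hc.1, fun s hs hlt => hlt.not_ge (hc.2 hs hlt.le)⟩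
  simp only [Finset.mem_filter, Finset.mem_univ, true_and] at hc
  refine ⟨c, hc.1, hc.2, fun s hs hsv => ?_⟩
  exact hmax s (by simp [le_of_lt hsv, hc.1.trans hs.le, hsv]) hs

lemma exists_cov_above {t v : P} (h : v < t) : ∃ c, v ⋖ c ∧ c ≤ t := by
  have : Fintype P := Fintype.ofFinite P
  classical
  obtain ⟨c, hc, hmin⟩ : ∃ c ∈ (Finset.univ.filter fun s => v < s ∧ s ≤ t), ∀ s ∈ (Finset.univ.filter fun s => v < s ∧ s ≤ t), ¬ s < c := (Finset.exists_minimal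
    (s := Finset.univ.filter fun s => v < s ∧ s ≤ t) ⟨t, by simp [h]⟩).elim fun c hc => ⟨c, hc.1, fun s hs hlt => hlt.not_ge (hc.2 hs hlt.le)⟩
  simp only [Finset.mem_filter, Finset.mem_univ, true_and] at hc
  exact ⟨c, ⟨hc.1, fun s hs hsc => hmin s (by simp [hs, hsc.le.trans hc.2]) hsc⟩, hc.2⟩

lemma exists_isMax_above (x : P) : ∃ b, x ≤ b ∧ IsMax b := by
  have : Fintype P := Fintype.ofFinite P
  classical
  obtain ⟨c, hc, hmax⟩ : ∃ c ∈ (Finset.univ.filter fun s => x ≤ s), ∀ s ∈ (Finset.univ.filter fun s => x ≤ s), ¬ c < s := (Finset.exists_maximal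
    (s := Finset.univ.filter fun s => x ≤ s) ⟨x, by simp⟩).elim fun c hc => ⟨c, hc.1, fun s hs hlt => hlt.not_ge (hc.2 hs hlt.le)⟩
  simp only [Finset.mem_filter, Finset.mem_univ, true_and] at hc
  refine ⟨c, hc, fun b hb => ?_⟩
  by_contra hlt
  exact hmax b (by simp [hc.trans hb]) (lt_of_le_not_ge hb hlt)

lemma exists_isMin_below (x : P) : ∃ a, a ≤ x ∧ IsMin a := by
  have : Fintype P := Fintype.ofFinite P
  classical
  obtain ⟨c, hc, hmin⟩ : ∃ c ∈ (Finset.univ.filter fun s => s ≤ x), ∀ s ∈ (Finset.univ.filter fun s => s ≤ x), ¬ s < c := (Finset.exists_minimal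
    (s := Finset.univ.filter fun s => s ≤ x) ⟨x, by simp⟩).elim fun c hc => ⟨c, hc.1, fun s hs hlt => hlt.not_ge (hc.2 hs hlt.le)⟩
  simp only [Finset.mem_filter, Finset.mem_univ, true_and] at hc
  refine ⟨c, hc, fun b hb => ?_⟩
  by_contra hlt
  exact hmin b (by simp [hb.trans hc]) (lt_of_le_not_ge hb hlt)
/-- saturated chain from a minimal element up to x -/
lemma exists_chain_to (x : P) : ∃ (l : List P) (a : P), l.Chain' (· ⋖ ·) ∧
    l.head? = some a ∧ IsMin a ∧ l.getLast? = some x := by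
  induction x using WellFoundedLT.induction with
  | _ x ih =>
  by_cases hx : IsMin x
  · exact ⟨[x], x, List.isChain_singleton _, by simp, hx, by simp⟩
  · rw [not_isMin_iff] at hx
    obtain ⟨y, hy⟩ := hx
    obtain ⟨c, hcx⟩ := exists_cov_below hy
    obtain ⟨l, a, hl, hha, hamin, hlast⟩ := ih c hcx.2.1
    refine ⟨l ++ [x], a, ?_, ?_, hamin, by simp⟩
    · unfold List.Chain'; rw [List.isChain_append]
      refine ⟨hl, by simp, fun p hp q hq => ?_⟩
      simp only [List.head?_cons, Option.some.injEq] at hq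
      rw [hlast, Option.mem_def, Option.some.injEq] at hp
      rw [Option.mem_def, Option.some.injEq] at hq
      subst hp; subst hq; exact hcx.2
    · cases l with
      | nil => simp at hlast
      | cons e t => simpa using hha

lemma exists_chain_from (x : P) : ∃ (l : List P) (b : P), l.Chain' (· ⋖ ·) ∧
    l.head? = some x ∧ l.getLast? = some b ∧ IsMax b := by
  induction x using WellFoundedGT.induction with
  | _ x ih =>
  by_cases hx : IsMax x
  · exact ⟨[x], x, List.isChain_singleton _, by simp, by simp, hx⟩
  · rw [not_isMax_iff] at hx
    obtain ⟨y, hy⟩ := hx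
    obtain ⟨c, hcx, _⟩ := exists_cov_above hy
    obtain ⟨l, b, hl, hhead, hlast, hbmax⟩ := ih c hcx.lt
    refine ⟨x :: l, b, ?_, by simp, ?_, hbmax⟩
    · cases l with
      | nil => simp at hhead
      | cons e t =>
        simp only [List.head?_cons, Option.some.injEq] at hhead
        subst hhead
        exact List.IsChain.cons_cons hcx hl
    · cases l with
      | nil => simp at hhead
      | cons e t => simpa using hlast

end Fin

section Sub
variable {v u : P}

local notation "P'" => {x : P // x ≠ v}

lemma sub_covBy_iff (hvmax : IsMax v) {x y : P'} : x ⋖ y ↔ x.val ⋖ y.val := by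
  constructor
  · rintro ⟨hlt, hbet⟩
    rw [Subtype.mk_lt_mk] at hlt
    refine ⟨hlt, fun t ht1 ht2 => ?_⟩
    have htv : t ≠ v := fun h => absurd (hvmax (le_of_lt (h ▸ ht2))) (not_le_of_gt (h ▸ ht2))
    exact hbet (show x < ⟨t, htv⟩ from ht1) (show (⟨t, htv⟩ : P') < y from ht2)
  · rintro ⟨hlt, hbet⟩
    exact ⟨hlt, fun t ht1 ht2 => hbet (Subtype.coe_lt_coe.mpr ht1) (Subtype.coe_lt_coe.mpr ht2)⟩

lemma sub_hasse_adj (hvmax : IsMax v) {x y : P'} :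
    (hasse P').Adj x y ↔ (hasse P).Adj x.val y.val := by
  rw [hasse_adj, hasse_adj, sub_covBy_iff hvmax, sub_covBy_iff hvmax,
    ne_eq, ne_eq, Subtype.ext_iff]

lemma sub_isMin_iff (hvmax : IsMax v) (hvnotmin : ¬ IsMin v) {x : P'} :
    IsMin x ↔ IsMin x.val := by
  constructor
  · intro h t ht
    have htv : t ≠ v := by
      intro hh
      have hlt : v < x.val := lt_of_le_of_ne (hh ▸ ht) (Ne.symm x.prop)
      exact absurd (hvmax hlt.le) (not_le_of_gt hlt)
    exact @h ⟨t, htv⟩ ht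
  · intro h t ht
    exact @h t.val ht

lemma sub_isMax_of {x : P} (hx : IsMax x) (hxv : x ≠ v) : IsMax (⟨x, hxv⟩ : P') :=
  fun t ht => @hx t.val ht

lemma sub_isMax_val {x : P'} (h : IsMax x) : ∀ t : P, x.val < t → t = v := by
  intro t ht
  by_contra htv
  exact absurd (@h ⟨t, htv⟩ ht.le) (not_le_of_gt ht)

lemma sub_no_pencil (hnp : ¬ HasPencil P) : ¬ HasPencil P' := by
  intro ⟨z, Xs, Ys, hXnt, hYnt, hXlt, hYlt, hXa, hYa⟩
  refine hnp ⟨z.val, Subtype.val '' Xs, Subtype.val '' Ys,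
    hXnt.image Subtype.val_injective, hYnt.image Subtype.val_injective,
    ?_, ?_, ?_, ?_⟩
  · rintro x ⟨x', hx', rfl⟩; exact hXlt x' hx'
  · rintro y ⟨y', hy', rfl⟩; exact hYlt y' hy'
  · rintro x ⟨x', hx', rfl⟩ y ⟨y', hy', rfl⟩ hne hle
    exact hXa hx' hy' (fun h => hne (congrArg _ h)) hle
  · rintro x ⟨x', hx', rfl⟩ y ⟨y', hy', rfl⟩ hne hle
    exact hYa hx' hy' (fun h => hne (congrArg _ h)) hle

end Sub

section Sub2
variable {v u : P}
local notation "P'" => {x : P // x ≠ v}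

lemma sub_walk_reachable (hvmax : IsMax v) :
    ∀ {x y : P} (w : (hasse P).Walk x y) (hx : x ≠ v) (hy : y ≠ v),
      v ∉ w.support → (hasse P').Reachable ⟨x, hx⟩ ⟨y, hy⟩ := by
  intro x y w
  induction w with
  | nil => intro hx hy _; rfl
  | @cons a b c h w ih =>
    intro hx hy hv
    rw [SimpleGraph.Walk.support_cons, List.mem_cons] at hv
    push_neg at hv
    have hb : b ≠ v := fun hh => hv.2 (hh ▸ w.start_mem_support)
    exact ((sub_hasse_adj hvmax (x := ⟨a, hx⟩) (y := ⟨b, hb⟩)).mpr h).reachable.trans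
      (ih hb hy hv.2)

lemma sub_isTree (htree : (hasse P).IsTree) (hvmax : IsMax v) (hunv : u ≠ v)
    (huniq : ∀ w, (hasse P).Adj v w → w = u) : (hasse P').IsTree := by
  classical
  constructor
  · rw [SimpleGraph.connected_iff]
    refine ⟨?_, ⟨⟨u, hunv⟩⟩⟩
    intro x y
    obtain ⟨w⟩ := htree.isConnected.preconnected x.val y.val
    have hp := w.toPath.prop
    have hv : v ∉ (w.toPath : (hasse P).Walk x.val y.val).support :=
      leaf_not_mem_path huniq x.prop y.prop _ hp
    have := sub_walk_reachable hvmax (w.toPath : (hasse P).Walk x.val y.val)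
      x.prop y.prop hv
    simpa using this
  · intro x c hc
    have hinj : Function.Injective (Subtype.val : P' → P) := Subtype.val_injective
    have hmap : ((c.map ⟨Subtype.val, fun h => (sub_hasse_adj hvmax).mp h⟩)).IsCycle :=
      hc.map hinj
    exact htree.IsAcyclic _ hmap

end Sub2

section Dual

lemma dual_hasse_adj {x y : P} :
    (hasse Pᵒᵈ).Adj (OrderDual.toDual x) (OrderDual.toDual y) ↔ (hasse P).Adj x y := by
  rw [hasse_adj, hasse_adj, toDual_covBy_toDual_iff, toDual_covBy_toDual_iff]
  constructor
  · rintro ⟨hne, h⟩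
    exact ⟨fun hh => hne (congrArg OrderDual.toDual hh), h.symm⟩
  · rintro ⟨hne, h⟩
    exact ⟨fun hh => hne (congrArg OrderDual.ofDual hh), h.symm⟩

def dual_hasse_hom : hasse P →g hasse Pᵒᵈ :=
  ⟨OrderDual.toDual, fun h => dual_hasse_adj.mpr h⟩

def dual_hasse_hom' : hasse Pᵒᵈ →g hasse P :=
  ⟨OrderDual.ofDual, fun {a b} h => by
    rw [show a = OrderDual.toDual (OrderDual.ofDual a) from rfl,
      show b = OrderDual.toDual (OrderDual.ofDual b) from rfl, dual_hasse_adj] at h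
    exact h⟩

lemma dual_isTree (h : (hasse P).IsTree) : (hasse Pᵒᵈ).IsTree := by
  constructor
  · rw [SimpleGraph.connected_iff]
    have hne : Nonempty P := h.isConnected.nonempty
    refine ⟨fun x y => ?_, ⟨OrderDual.toDual hne.some⟩⟩
    exact (h.isConnected.preconnected (OrderDual.ofDual x) (OrderDual.ofDual y)).map
      dual_hasse_hom
  · intro x c hc
    exact h.IsAcyclic _ (hc.map (f := dual_hasse_hom') OrderDual.ofDual.injective)

lemma dual_no_pencil (h : ¬ HasPencil P) : ¬ HasPencil Pᵒᵈ := by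
  intro ⟨z, Xs, Ys, hXnt, hYnt, hXlt, hYlt, hXa, hYa⟩
  refine h ⟨OrderDual.ofDual z, OrderDual.ofDual '' Ys, OrderDual.ofDual '' Xs,
    hYnt.image OrderDual.ofDual.injective, hXnt.image OrderDual.ofDual.injective,
    ?_, ?_, ?_, ?_⟩
  · rintro x ⟨x', hx', rfl⟩; exact hYlt x' hx'
  · rintro y ⟨y', hy', rfl⟩; exact hXlt y' hy'
  · rintro x ⟨x', hx', rfl⟩ y ⟨y', hy', rfl⟩ hne hle
    exact hYa hy' hx' (fun hh => hne (congrArg _ hh.symm)) hle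
  · rintro x ⟨x', hx', rfl⟩ y ⟨y', hy', rfl⟩ hne hle
    exact hXa hy' hx' (fun hh => hne (congrArg _ hh.symm)) hle

end Dual

def Core (P : Type*) [PartialOrder P] : Prop :=
  (∃ a : P, IsMin a ∧ ∃! b : P, IsMax b ∧ a ≤ b) ∨
  (∃ b : P, IsMax b ∧ ∃! a : P, IsMin a ∧ a ≤ b)

lemma dual_core {P : Type*} [PartialOrder P] (h : Core Pᵒᵈ) : Core P := by
  rcases h with ⟨a, hamin, b, ⟨hbmax, hab⟩, huniq⟩ | ⟨b, hbmax, a, ⟨hamin, hab⟩, huniq⟩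
  · refine Or.inr ⟨OrderDual.ofDual a, isMax_ofDual_iff.mpr hamin,
      OrderDual.ofDual b, ⟨isMin_ofDual_iff.mpr hbmax, hab⟩, ?_⟩
    intro y ⟨hymin, hy⟩
    have := huniq (OrderDual.toDual y) ⟨isMax_toDual_iff.mpr hymin, hy⟩
    exact congrArg OrderDual.ofDual this
  · refine Or.inl ⟨OrderDual.ofDual b, isMin_ofDual_iff.mpr hbmax,
      OrderDual.ofDual a, ⟨isMax_ofDual_iff.mpr hamin, hab⟩, ?_⟩
    intro y ⟨hymax, hy⟩
    have := huniq (OrderDual.toDual y) ⟨isMin_toDual_iff.mpr hymax, hy⟩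
    exact congrArg OrderDual.ofDual this

lemma core_step (n : ℕ)
    (IH : ∀ m, m < n → ∀ (Q : Type) [PartialOrder Q] [Fintype Q],
      Fintype.card Q = m → IsTreePoset Q → Core Q)
    (P : Type) [PartialOrder P] [Fintype P] (hcard : Fintype.card P = n)
    (htree : (hasse P).IsTree) (hnp : ¬ HasPencil P)
    (v u : P) (hcov : u ⋖ v) (huniq : ∀ w, (hasse P).Adj v w → w = u) : Core P := by
  classical
  have hunv : u ≠ v := ne_of_lt hcov.1
  have hvnotmin : ¬ IsMin v := fun h => absurd (h hcov.1.le) (not_le_of_gt hcov.1)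
  have hvmax : IsMax v := by
    intro t ht
    by_contra hnt
    have hlt : v < t := lt_of_le_not_ge ht hnt
    obtain ⟨c, hvc, hct⟩ := exists_cov_above hlt
    have hadj : (hasse P).Adj v c := hasse_adj.mpr ⟨ne_of_lt hvc.1, Or.inl hvc⟩
    have hcu : c = u := huniq c hadj
    exact absurd (hcu ▸ hvc.1) (not_lt_of_ge hcov.1.le)
  have hbelow : ∀ t, t < v → t ≤ u := by
    intro t ht
    obtain ⟨c, htc, hcv⟩ := exists_cov_below ht
    have hadj : (hasse P).Adj v c := hasse_adj.mpr ⟨(ne_of_lt hcv.1).symm, Or.inr hcv⟩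
    exact (huniq c hadj) ▸ htc
  -- the poset with v removed
  have h2 : 2 ≤ n := hcard ▸ Fintype.one_lt_card_iff_nontrivial.mpr ⟨u, v, hunv⟩
  have hcard' : Fintype.card {x : P // x ≠ v} = n - 1 := by
    have := Fintype.card_subtype_compl (fun x : P => x = v)
    rw [Fintype.card_subtype_eq, hcard] at this
    exact this
  have htree' := sub_isTree (v := v) htree hvmax hunv huniq
  have hnp' := sub_no_pencil (v := v) hnp
  have hcore' : Core {x : P // x ≠ v} :=
    IH (n-1) (by omega) _ hcard' ⟨htree', hnp'⟩
  have minlift : ∀ x : {x : P // x ≠ v}, IsMin x ↔ IsMin x.val :=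
    fun x => sub_isMin_iff hvmax hvnotmin
  have maxder : ∀ x : {x : P // x ≠ v}, IsMax x → x.val ≠ u → IsMax x.val := by
    intro x hx hxu t ht
    rcases eq_or_lt_of_le ht with rfl | hlt
    · rfl
    have htv : t = v := sub_isMax_val hx t hlt
    have hxvlt : x.val < v := htv ▸ hlt
    have hxu' : x.val < u := lt_of_le_of_ne (hbelow _ hxvlt) hxu
    have : (⟨u, hunv⟩ : {x : P // x ≠ v}) ≤ x := hx hxu'.le
    exact absurd (lt_of_lt_of_le hxu' this) (lt_irrefl _)
  rcases hcore' with ⟨a', ha'min, b', ⟨hb'max, hab'⟩, hb'uniq⟩ |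
    ⟨b', hb'max, a', ⟨ha'min, ha'b⟩, ha'uniq⟩
  · -- min a' with unique max above in P'
    have hamin : IsMin a'.val := (minlift a').mp ha'min
    by_cases hau : a'.val ≤ u
    · have hav : a'.val ≤ v := hau.trans hcov.1.le
      by_cases hbu : b'.val = u
      · -- unique max above a is v
        refine Or.inl ⟨a'.val, hamin, v, ⟨hvmax, hav⟩, ?_⟩
        rintro y ⟨hymax, hay⟩
        by_contra hyv
        have h1 : (⟨y, hyv⟩ : {x : P // x ≠ v}) = b' :=
          hb'uniq _ ⟨sub_isMax_of hymax hyv, hay⟩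
        have hyu : y = u := by rw [← hbu, ← h1]
        exact absurd ((hyu ▸ hymax) hcov.1.le) (not_le_of_gt hcov.1)
      · -- bad case: use no-pencil at u
        obtain ⟨c, huc, hcmax⟩ := exists_isMax_above (⟨u, hunv⟩ : {x : P // x ≠ v})
        have hcb : c = b' :=
          hb'uniq _ ⟨hcmax, le_trans (show a' ≤ ⟨u, hunv⟩ from hau) huc⟩
        have hub : u ≤ b'.val := by
          have : (⟨u, hunv⟩ : {x : P // x ≠ v}) ≤ b' := hcb ▸ huc
          exact this
        have hub' : u < b'.val := lt_of_le_of_ne hub (fun hh => hbu hh.symm)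
        have hb0max : IsMax b'.val := maxder b' hb'max hbu
        have hvb0 : v ≠ b'.val := fun hh => b'.prop hh.symm
        obtain ⟨am, ham_le, ham_min⟩ := exists_isMin_below u
        refine Or.inr ⟨v, hvmax, am, ⟨ham_min, ham_le.trans hcov.1.le⟩, ?_⟩
        rintro y ⟨hymin, hyle⟩
        have hyne : y ≠ v := fun hh => hvnotmin (hh ▸ hymin)
        have hyu : y ≤ u := hbelow y (lt_of_le_of_ne hyle hyne)
        -- any two minimal elements below u are equal
        rcases eq_or_lt_of_le hyu with rfl | hylt
        · exact le_antisymm (hymin ham_le) ham_le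
        rcases eq_or_lt_of_le ham_le with rfl | hamlt
        · exact le_antisymm hyu (ham_min hyu)
        by_contra hne
        refine hnp ⟨u, {y, am}, {v, b'.val}, ⟨y, by simp, am, by simp, hne⟩,
          ⟨v, by simp, b'.val, by simp, hvb0⟩, ?_, ?_, ?_, ?_⟩
        · rintro x hx
          rcases hx with rfl | rfl
          · exact hylt
          · exact hamlt
        · rintro x hx
          rcases hx with rfl | rfl
          · exact hcov.1
          · exact hub'
        · rintro x hx z hz hxz hle
          rcases hx with rfl | rfl <;> rcases hz with rfl | rfl
          · exact hxz rfl
          · exact hxz (le_antisymm hle (ham_min hle))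
          · exact hxz (le_antisymm hle (hymin hle))
          · exact hxz rfl
        · rintro x hx z hz hxz hle
          rcases hx with rfl | rfl <;> rcases hz with rfl | rfl
          · exact hxz rfl
          · exact hxz (le_antisymm hle (hvmax hle))
          · exact hxz (le_antisymm hle (hb0max hle))
          · exact hxz rfl
    · -- a not below u hence not below v: maxes above a are the same in P and P'
      have hav : ¬ a'.val ≤ v := by
        intro h
        exact hau (hbelow _ (lt_of_le_of_ne h a'.prop))
      obtain ⟨b₀, hab₀, hb₀max⟩ := exists_isMax_above a'.val
      have hb₀v : b₀ ≠ v := fun hh => hav (hh ▸ hab₀)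
      refine Or.inl ⟨a'.val, hamin, b₀, ⟨hb₀max, hab₀⟩, ?_⟩
      rintro y ⟨hymax, hay⟩
      have hyv : y ≠ v := fun hh => hav (hh ▸ hay)
      have h1 : (⟨y, hyv⟩ : {x : P // x ≠ v}) = b' :=
        hb'uniq _ ⟨sub_isMax_of hymax hyv, hay⟩
      have h2' : (⟨b₀, hb₀v⟩ : {x : P // x ≠ v}) = b' :=
        hb'uniq _ ⟨sub_isMax_of hb₀max hb₀v, hab₀⟩
      exact congrArg Subtype.val (h1.trans h2'.symm)
  · -- max b' with unique min below in P'
    by_cases hbu : b'.val = u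
    · -- u is maximal in P'; v is a P-max whose minimals are those of u
      have hamin : IsMin a'.val := (minlift a').mp ha'min
      refine Or.inr ⟨v, hvmax, a'.val,
        ⟨hamin, le_trans (le_trans ha'b (le_of_eq hbu)) hcov.1.le⟩, ?_⟩
      rintro y ⟨hymin, hyle⟩
      have hyne : y ≠ v := fun hh => hvnotmin (hh ▸ hymin)
      have hyu : y ≤ u := hbelow y (lt_of_le_of_ne hyle hyne)
      have h1 : (⟨y, hyne⟩ : {x : P // x ≠ v}) = a' :=
        ha'uniq _ ⟨(minlift _).mpr hymin, by
          show y ≤ b'.val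
          rw [hbu]; exact hyu⟩
      exact congrArg Subtype.val h1
    · have hb0max : IsMax b'.val := maxder b' hb'max hbu
      have hamin : IsMin a'.val := (minlift a').mp ha'min
      refine Or.inr ⟨b'.val, hb0max, a'.val, ⟨hamin, ha'b⟩, ?_⟩
      rintro y ⟨hymin, hyle⟩
      have hyne : y ≠ v := fun hh => hvnotmin (hh ▸ hymin)
      exact congrArg Subtype.val (ha'uniq ⟨y, hyne⟩ ⟨(minlift _).mpr hymin, hyle⟩)

section LeafEx
variable {V : Type*} [Fintype V] {G : SimpleGraph V}

lemma exists_leaf (hG : G.IsTree) (h2 : 2 ≤ Fintype.card V) :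
    ∃ v u : V, G.Adj v u ∧ ∀ w, G.Adj v w → w = u := by
  classical
  have hcard := hG.card_edgeFinset
  by_contra hcon
  push_neg at hcon
  have hdeg : ∀ v : V, 2 ≤ G.degree v := by
    intro v
    have hne : ∃ u, G.Adj v u := by
      obtain ⟨w, hw⟩ := Fintype.exists_ne_of_one_lt_card h2 v
      obtain ⟨p⟩ := hG.isConnected.preconnected v w
      cases p with
      | nil => exact absurd rfl hw.symm
      | cons h _ => exact ⟨_, h⟩
    obtain ⟨u, hu⟩ := hne
    obtain ⟨w, hw, hwu⟩ := hcon v u hu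
    have hsub : {u, w} ⊆ G.neighborFinset v := by
      intro x hx
      simp only [Finset.mem_insert, Finset.mem_singleton] at hx
      rcases hx with rfl | rfl <;> simp [SimpleGraph.mem_neighborFinset, hu, hw]
    calc 2 = ({u, w} : Finset V).card := by
          rw [Finset.card_insert_of_notMem (by simpa using Ne.symm hwu), Finset.card_singleton]
      _ ≤ (G.neighborFinset v).card := Finset.card_le_card hsub
      _ = G.degree v := rfl
  have hsum := G.sum_degrees_eq_twice_card_edges
  have hge : 2 * Fintype.card V ≤ ∑ v, G.degree v := by
    calc 2 * Fintype.card V = ∑ _v : V, 2 := by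
          rw [Finset.sum_const, Finset.card_univ, smul_eq_mul, mul_comm]
      _ ≤ ∑ v, G.degree v := Finset.sum_le_sum (fun v _ => hdeg v)
  omega
end LeafEx

theorem main_aux : ∀ n : ℕ, ∀ (P : Type) [PartialOrder P] [Fintype P],
    Fintype.card P = n → IsTreePoset P → Core P := by
  intro n
  induction n using Nat.strong_induction_on with
  | _ n IH =>
  rintro P _ _ hcard ⟨htree, hnp⟩
  rcases le_or_gt (Fintype.card P) 1 with h1 | h2
  · have hne : Nonempty P := htree.isConnected.nonempty
    obtain ⟨x⟩ := hne
    have hsub : ∀ y : P, y = x := fun y => Fintype.card_le_one_iff.mp h1 y x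
    refine Or.inl ⟨x, fun b _ => le_of_eq (hsub b).symm,
      x, ⟨fun b _ => le_of_eq (hsub b), le_rfl⟩, fun y _ => hsub y⟩
  · obtain ⟨v, u, hadj, huniq⟩ := exists_leaf htree (by omega)
    obtain ⟨hne, hcov | hcov⟩ := hasse_adj.mp hadj
    · -- v ⋖ u : dualize
      refine dual_core (core_step n ?_ Pᵒᵈ ?_ (dual_isTree htree) (dual_no_pencil hnp)
        (OrderDual.toDual v) (OrderDual.toDual u) (toDual_covBy_toDual_iff.mpr hcov) ?_)
      · intro m hm Q _ _ hq htq
        exact IH m hm Q hq htq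
      · rw [show Fintype.card Pᵒᵈ = Fintype.card P from Fintype.card_congr OrderDual.ofDual]
        exact hcard
      · intro w hw
        have : (hasse P).Adj v (OrderDual.ofDual w) := by
          rw [← dual_hasse_adj]; exact hw
        exact congrArg OrderDual.toDual (huniq _ this)
    · -- u ⋖ v
      refine core_step n ?_ P hcard htree hnp v u hcov huniq
      intro m hm Q _ _ hq htq
      exact IH m hm Q hq htq


lemma mem_of_getLast?' {l : List P} {b : P} (h : l.getLast? = some b) : b ∈ l := by
  rcases List.eq_nil_or_concat l with rfl | ⟨t, c, rfl⟩
  · simp at h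
  · simp only [List.concat_eq_append] at *
    have : c = b := by simpa using h
    subst this
    simp

lemma mem_of_head?' {l : List P} {a : P} (h : l.head? = some a) : a ∈ l := by
  cases l with
  | nil => simp at h
  | cons x t =>
    simp only [List.head?_cons, Option.some.injEq] at h
    subst h; simp

end Aux
/-- In a tree poset there is a maximal saturated chain whose top or bottom element
lies in no other maximal saturated chain. -/
theorem treePoset_exists_private_chain (P : Type) [PartialOrder P] [Fintype P]
    (hP : IsTreePoset P) :
    ∃ l : List P, IsMaxSatChain l ∧
      ((∃ b, l.getLast? = some b ∧ ∀ l', IsMaxSatChain l' → b ∈ l' → l' = l) ∨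
       (∃ a, l.head? = some a ∧ ∀ l', IsMaxSatChain l' → a ∈ l' → l' = l)) := by
  obtain ⟨htree, hnp⟩ := hP
  have hac : (hasse P).IsAcyclic := htree.IsAcyclic
  have hcore : Core P := main_aux (Fintype.card P) P rfl ⟨htree, hnp⟩
  rcases hcore with ⟨a, hamin, b, ⟨hbmax, hab⟩, hbuniq⟩ | ⟨b, hbmax, a, ⟨hamin, hab⟩, hauniq⟩
  · -- min a with unique max above: head-private chain
    obtain ⟨l, b₀, hlc, hhead, hlast, hb₀max⟩ := exists_chain_from a
    have hab₀ : a ≤ b₀ := head_le_mem_of_chain hlc hhead (mem_of_getLast?' hlast)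
    have hb₀ : b₀ = b := hbuniq b₀ ⟨hb₀max, hab₀⟩
    refine ⟨l, ⟨hlc, ⟨a, hhead, hamin⟩, ⟨b₀, hlast, hb₀max⟩⟩, Or.inr ⟨a, hhead, ?_⟩⟩
    rintro l' ⟨hlc', ⟨a', hhead', hamin'⟩, ⟨b', hlast', hbmax'⟩⟩ hmem
    have hh : l'.head? = some a := head_eq_of_isMin hlc' hamin hmem
    have hab' : a ≤ b' := head_le_mem_of_chain hlc' hh (mem_of_getLast?' hlast')
    have hb' : b' = b := hbuniq b' ⟨hbmax', hab'⟩
    exact chain_unique hac hlc' hlc hh (hb'.symm ▸ hlast') hhead (hb₀.symm ▸ hlast)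
  · -- max b with unique min below: tail-private chain
    obtain ⟨l, a₀, hlc, hhead, ha₀min, hlast⟩ := exists_chain_to b
    have ha₀b : a₀ ≤ b := head_le_mem_of_chain hlc hhead (mem_of_getLast?' hlast)
    have ha₀ : a₀ = a := hauniq a₀ ⟨ha₀min, ha₀b⟩
    refine ⟨l, ⟨hlc, ⟨a₀, hhead, ha₀min⟩, ⟨b, hlast, hbmax⟩⟩, Or.inl ⟨b, hlast, ?_⟩⟩
    rintro l' ⟨hlc', ⟨a', hhead', hamin'⟩, ⟨b', hlast', hbmax'⟩⟩ hmem
    have hl : l'.getLast? = some b := last_eq_of_isMax hlc' hbmax hmem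
    have hab' : a' ≤ b := head_le_mem_of_chain hlc' hhead' (mem_of_getLast?' hl)
    have ha' : a' = a := hauniq a' ⟨hamin', hab'⟩
    exact chain_unique hac hlc' hlc (ha' ▸ hhead' : l'.head? = some a) hl
      (ha₀ ▸ hhead : l.head? = some a) hlast
end
end

section
/- Let P be a tree poset, t ≥ 2, and let F = (x_{i_1},…,x_{i_t}) and G = (x_{j_1},…,x_{j_t}) be two saturated chains of length t in P with nonempty intersection (as vertex sets). Then F ∩ G is the vertex set of a single saturated chain x_{k_1} < ⋯ < x_{k_s} with s ≤ t, and x_{i_1} ≤ x_{k_1} and x_{j_1} ≤ x_{k_1} in P. -/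
open MvPolynomial

noncomputable section
lemma chain_pairwise {P : Type*} [PartialOrder P] {l : List P}
    (hl : l.Chain' (· ⋖ ·)) : l.Pairwise (· < ·) :=
  List.isChain_iff_pairwise.mp (hl.imp fun _ _ h => h.lt)

lemma head_le_of_pairwise {P : Type*} [PartialOrder P] {a : P} {l : List P}
    (h : (a :: l).Pairwise (· < ·)) {x : P} (hx : x ∈ a :: l) : a ≤ x := by
  rcases List.mem_cons.mp hx with rfl | hx
  · exact le_rfl
  · exact ((List.pairwise_cons.mp h).1 x hx).le

lemma seg {P : Type*} [PartialOrder P] (l : List P) (hl : l.Chain' (· ⋖ ·))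
    (u w : P) (hu : u ∈ l) (hw : w ∈ l) (huw : u ≤ w) :
    ∃ p : (hasse P).Walk u w, p.IsPath ∧
      ∀ x, x ∈ p.support ↔ (x ∈ l ∧ u ≤ x ∧ x ≤ w) := by
  revert hl hu hw huw
  induction l generalizing u w with
  | nil => intro _ hu; simp at hu
  | cons a rest ih =>
    intro hl hu hw huw
    have hpl : (a :: rest).Pairwise (· < ·) := chain_pairwise hl
    have hhead : ∀ z ∈ rest, a < z := (List.pairwise_cons.mp hpl).1
    by_cases hua : u = a
    · subst hua
      by_cases hwu : w = u
      · subst hwu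
        refine ⟨SimpleGraph.Walk.nil, SimpleGraph.Walk.IsPath.nil, fun x => ?_⟩
        simp only [SimpleGraph.Walk.support_nil, List.mem_singleton]
        constructor
        · rintro rfl; exact ⟨hu, le_rfl, le_rfl⟩
        · rintro ⟨hxl, hux, hxu⟩
          rcases List.mem_cons.mp hxl with rfl | hxr
          · rfl
          · exact absurd hxu (hhead x hxr).not_ge
      · have hwrest : w ∈ rest := by
          rcases List.mem_cons.mp hw with rfl | h
          · exact absurd rfl hwu
          · exact h
        obtain ⟨b, rest', rfl⟩ : ∃ b rest', rest = b :: rest' := by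
          cases rest with
          | nil => simp at hwrest
          | cons b r => exact ⟨b, r, rfl⟩
        have hab : u ⋖ b := (List.isChain_cons_cons.mp hl).1
        have hptail : (b :: rest').Pairwise (· < ·) := hpl.tail
        have hbw : b ≤ w := head_le_of_pairwise hptail hwrest
        obtain ⟨p', hp', hs'⟩ := ih b w hl.tail List.mem_cons_self hwrest hbw
        have hadj : (hasse P).Adj u b :=
          (SimpleGraph.fromRel_adj _ _ _).mpr ⟨hab.lt.ne, Or.inl hab⟩
        refine ⟨SimpleGraph.Walk.cons hadj p', ?_, fun x => ?_⟩
        · rw [SimpleGraph.Walk.cons_isPath_iff]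
          refine ⟨hp', fun h => ?_⟩
          have := ((hs' u).1 h).2.1
          exact absurd this hab.lt.not_ge
        · simp only [SimpleGraph.Walk.support_cons, List.mem_cons]
          constructor
          · rintro (rfl | hx)
            · exact ⟨Or.inl rfl, le_rfl, le_trans hab.lt.le hbw⟩
            · obtain ⟨hxl, hbx, hxw⟩ := (hs' x).1 hx
              exact ⟨Or.inr (List.mem_cons.mp hxl), le_trans hab.lt.le hbx, hxw⟩
          · rintro ⟨hxl, hax, hxw⟩
            rcases hxl with rfl | hxr
            · exact Or.inl rfl
            · exact Or.inr ((hs' x).2 ⟨List.mem_cons.mpr hxr, head_le_of_pairwise hptail (List.mem_cons.mpr hxr), hxw⟩)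
    · have hurest : u ∈ rest := by
        rcases List.mem_cons.mp hu with rfl | h
        · exact absurd rfl hua
        · exact h
      have hau : a < u := hhead u hurest
      have hwrest : w ∈ rest := by
        rcases List.mem_cons.mp hw with rfl | h
        · exact absurd huw hau.not_ge
        · exact h
      obtain ⟨p, hp, hs⟩ := ih u w hl.tail hurest hwrest huw
      refine ⟨p, hp, fun x => ?_⟩
      rw [hs x]
      constructor
      · rintro ⟨h1, h2, h3⟩; exact ⟨List.mem_cons_of_mem _ h1, h2, h3⟩
      · rintro ⟨h1, h2, h3⟩
        rcases List.mem_cons.mp h1 with rfl | h1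
        · exact absurd h2 hau.not_ge
        · exact ⟨h1, h2, h3⟩

lemma filter_chain {P : Type*} [PartialOrder P] (l : List P) (hl : l.Chain' (· ⋖ ·))
    (p : P → Bool)
    (hconv : ∀ x ∈ l, ∀ y ∈ l, ∀ v ∈ l, p x → p y → x ≤ v → v ≤ y → p v) :
    (l.filter p).Chain' (· ⋖ ·) := by
  induction l with
  | nil => exact List.isChain_nil
  | cons a rest ih =>
    have htail := ih hl.tail (fun x hx y hy v hv => hconv x (List.mem_cons_of_mem _ hx)
      y (List.mem_cons_of_mem _ hy) v (List.mem_cons_of_mem _ hv))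
    rw [List.filter_cons]
    split
    · rename_i hpa
      apply List.isChain_cons.mpr
      refine ⟨?_, htail⟩
      intro b hb
      have hbmem : b ∈ rest.filter p := by
        cases h : (rest.filter p) with
        | nil => simp [h] at hb
        | cons c q => simp [h] at hb; simp [h, hb]
      have hbrest : b ∈ rest := (List.mem_filter.mp hbmem).1
      have hpb : p b := (List.mem_filter.mp hbmem).2
      cases rest with
      | nil => simp at hbrest
      | cons c rest' =>
        have hac : a ⋖ c := (List.isChain_cons_cons.mp hl).1
        by_cases hpc : p c
        · have : (c :: rest').filter p = c :: rest'.filter p := by simp [List.filter_cons, hpc]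
          rw [this] at hb
          simp at hb
          rw [← hb]; exact hac
        · exfalso
          have hfil : (c :: rest').filter p = rest'.filter p := by
            simp [List.filter_cons, hpc]
          have hbrest' : b ∈ rest' := by
            rw [hfil] at hbmem; exact (List.mem_filter.mp hbmem).1
          have hpl : (c :: rest').Pairwise (· < ·) := (chain_pairwise hl).tail
          have hcb : c < b := (List.pairwise_cons.mp hpl).1 b hbrest'
          exact hpc (hconv a List.mem_cons_self b
            (List.mem_cons_of_mem _ (List.mem_cons_of_mem _ hbrest'))
            c (List.mem_cons_of_mem _ List.mem_cons_self) hpa hpb hac.lt.le hcb.le)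
    · exact htail

/-- In a tree poset, the intersection of two saturated chains of length `t` is again
a saturated chain, whose bottom element lies above the bottoms of both chains. -/
theorem treePoset_chain_intersection (P : Type) [PartialOrder P] [Fintype P]
    (hP : IsTreePoset P) (t : ℕ) (ht : 2 ≤ t) (F G : List P)
    (hFlen : F.length = t) (hGlen : G.length = t)
    (hF : IsSatChain F) (hG : IsSatChain G) (hcap : ∃ x, x ∈ F ∧ x ∈ G) :
    ∃ m : List P, m ≠ [] ∧ IsSatChain m ∧ m.length ≤ t ∧
      (∀ x, x ∈ m ↔ (x ∈ F ∧ x ∈ G)) ∧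
      (∀ a fa, m.head? = some a → F.head? = some fa → fa ≤ a) ∧
      (∀ a ga, m.head? = some a → G.head? = some ga → ga ≤ a) := by
  classical
  obtain ⟨x0, hx0F, hx0G⟩ := hcap
  have hFc : F.Chain' (· ⋖ ·) := hF
  have hGc : G.Chain' (· ⋖ ·) := hG
  -- key convexity lemma
  have key : ∀ x ∈ F, ∀ y ∈ F, ∀ v ∈ F, x ∈ G → y ∈ G → x ≤ v → v ≤ y → v ∈ G := by
    intro x hxF y hyF v hvF hxG hyG hxv hvy
    have hxy : x ≤ y := le_trans hxv hvy
    obtain ⟨pF, hpF, hsF⟩ := seg F hFc x y hxF hyF hxy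
    obtain ⟨pG, hpG, hsG⟩ := seg G hGc x y hxG hyG hxy
    have hpath : (⟨pF, hpF⟩ : (hasse P).Path x y) = ⟨pG, hpG⟩ :=
      hP.1.IsAcyclic.path_unique _ _
    have hv : v ∈ pF.support := (hsF v).2 ⟨hvF, hxv, hvy⟩
    have hEq : pF = pG := congrArg Subtype.val hpath
    rw [hEq] at hv
    exact ((hsG v).1 hv).1
  set m := F.filter (fun x => decide (x ∈ G)) with hm
  have hmem : ∀ x, x ∈ m ↔ (x ∈ F ∧ x ∈ G) := by
    intro x
    simp [hm, List.mem_filter]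
  have hmne : m ≠ [] := by
    intro h
    have := (hmem x0).2 ⟨hx0F, hx0G⟩
    rw [h] at this
    simp at this
  have hmchain : m.Chain' (· ⋖ ·) := by
    apply filter_chain F hFc
    intro x hx y hy v hv hpx hpy hxv hvy
    simp only [decide_eq_true_eq] at hpx hpy ⊢
    exact key x hx y hy v hv hpx hpy hxv hvy
  have hmlen : m.length ≤ t := by
    have h := (List.filter_sublist (l := F) (p := fun x => decide (x ∈ G))).length_le
    rw [← hm] at h
    omega
  have hFpw : F.Pairwise (· < ·) := chain_pairwise hFc
  have hGpw : G.Pairwise (· < ·) := chain_pairwise hGc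
  refine ⟨m, hmne, hmchain, hmlen, hmem, ?_, ?_⟩
  · intro a fa ha hfa
    have haF : a ∈ F := ((hmem a).1 (List.mem_of_mem_head? (by rw [ha]; rfl))).1
    cases F with
    | nil => simp at hfa
    | cons f tl =>
      have : fa = f := (by simpa using hfa : f = fa).symm
      subst this
      exact head_le_of_pairwise hFpw haF
  · intro a ga ha hga
    have haG : a ∈ G := ((hmem a).1 (List.mem_of_mem_head? (by rw [ha]; rfl))).2
    cases G with
    | nil => simp at hga
    | cons g tl =>
      have : ga = g := (by simpa using hga : g = ga).symm
      subst this
      exact head_le_of_pairwise hGpw haG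
end
end

section
/- Let P be a tree poset, t ≥ 2, and x_{i_1},…,x_{i_t} a saturated chain in P such that x_{i_t} is a maximal element of P contained in a unique maximal saturated chain. Then the set {x_{i_1},…,x_{i_t}} is a leaf of the simplicial complex Δ_t(P) whose facets are the vertex sets of saturated chains of length t in P. -/
open MvPolynomial

noncomputable section
/-- `F` is a leaf of the family of facets `𝓕`: either `F` is the only facet, or there
is a facet `G ≠ F` with `F ∩ H ⊆ F ∩ G` for every facet `H ≠ F`. -/
def IsLeafOf {V : Type*} [DecidableEq V] (F : Finset V) (𝓕 : Set (Finset V)) : Prop :=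
  F ∈ 𝓕 ∧ (𝓕 = {F} ∨ ∃ G ∈ 𝓕, G ≠ F ∧ ∀ H ∈ 𝓕, H ≠ F → F ∩ H ⊆ F ∩ G)

/-- Connectivity of a simplicial complex, expressed on its family of facets. -/
def FacetsConnected {V : Type*} [DecidableEq V] (𝓕 : Set (Finset V)) : Prop :=
  ∀ F ∈ 𝓕, ∀ G ∈ 𝓕,
    Relation.ReflTransGen (fun A B => A ∈ 𝓕 ∧ B ∈ 𝓕 ∧ (A ∩ B).Nonempty) F G

/-- A simplicial forest (given by its family of facets): every nonempty subfamily
of the facets has a leaf. -/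
def IsSimplicialForest {V : Type*} [DecidableEq V] (𝓕 : Set (Finset V)) : Prop :=
  ∀ 𝓖 ⊆ 𝓕, 𝓖.Nonempty → ∃ F, IsLeafOf F 𝓖

/-- A simplicial tree: a connected simplicial forest. -/
def IsSimplicialTree {V : Type*} [DecidableEq V] (𝓕 : Set (Finset V)) : Prop :=
  FacetsConnected 𝓕 ∧ IsSimplicialForest 𝓕

/-- The facets of the facet complex `Δ_t(P)` of the path ideal: the vertex sets of
saturated chains with `t` elements. -/
def pathFacets (P : Type) [PartialOrder P] [DecidableEq P] (t : ℕ) : Set (Finset P) :=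
  {s | ∃ l : List P, l.length = t ∧ IsSatChain l ∧ s = l.toFinset}


section AuxLemmas

variable {Q : Type*} [PartialOrder Q]

lemma IsSatChain.pairwise_lt {l : List Q} (h : IsSatChain l) : l.Pairwise (· < ·) :=
  List.isChain_iff_pairwise.mp (List.IsChain.imp (fun _ _ hc => hc.lt) h)

lemma IsSatChain.nodup {l : List Q} (h : IsSatChain l) : l.Nodup :=
  h.pairwise_lt.imp ne_of_lt

lemma IsSatChain.getElem_lt {l : List Q} (h : IsSatChain l) {i j : ℕ}
    (hij : i < j) (hj : j < l.length) : l[i]'(lt_trans hij hj) < l[j] :=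
  List.pairwise_iff_getElem.mp h.pairwise_lt i j (lt_trans hij hj) hj hij

lemma IsSatChain.covby {l : List Q} (h : IsSatChain l) {i : ℕ}
    (hi : i + 1 < l.length) : l[i]'(by omega) ⋖ l[i+1] :=
  List.isChain_iff_getElem.mp h i (by omega)

lemma exists_min_extension [Fintype Q] :
    ∀ (a : Q) (l : List Q), IsSatChain l → l.head? = some a →
      ∃ m : List Q, IsSatChain (m ++ l) ∧ ∃ a', (m ++ l).head? = some a' ∧ IsMin a' := by
  classical
  have : WellFoundedLT Q := Finite.to_wellFoundedLT
  intro a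
  induction a using WellFoundedLT.induction with
  | _ a ih =>
    intro l hsat hhead
    by_cases hmin : IsMin a
    · exact ⟨[], by simpa using hsat, a, by simpa using hhead, hmin⟩
    · obtain ⟨y, hy⟩ := not_isMin_iff.mp hmin
      obtain ⟨z, hz, hzmax⟩ : ∃ z ∈ Finset.univ.filter (fun x => x < a),
          ∀ x ∈ Finset.univ.filter (fun x => x < a), ¬ z < x := by
        obtain ⟨z, hz, hzm⟩ := Finset.exists_maximal
          (s := Finset.univ.filter (fun x => x < a)) ⟨y, by simp [hy]⟩
        exact ⟨z, hz, fun x hx hzx => (hzm hx hzx.le).not_gt hzx⟩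
      simp only [Finset.mem_filter, Finset.mem_univ, true_and] at hz hzmax
      have hcov : z ⋖ a := ⟨hz, fun w hzw hwa => hzmax w hwa hzw⟩
      have hsat' : IsSatChain (z :: l) := by
        rw [IsSatChain, List.Chain', List.isChain_cons]
        refine ⟨?_, hsat⟩
        intro w hw
        rw [hhead, Option.mem_some_iff] at hw
        exact hw ▸ hcov
      obtain ⟨m, hmsat, a', ha', ha'min⟩ := ih z hz (z :: l) hsat' rfl
      refine ⟨m ++ [z], ?_, a', ?_, ha'min⟩
      · rwa [List.append_assoc, List.singleton_append]
      · rwa [List.append_assoc, List.singleton_append]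

lemma forced_prefix {cl : List Q}
    (uc : ∀ (i : ℕ) (hi : i < cl.length) (y : Q), y ⋖ cl[i] →
      ∃ (j : ℕ) (hj : j < cl.length), y = cl[j] ∧ j + 1 = i)
    {h : List Q} (hsat : IsSatChain h) {r i : ℕ} (hr : r < h.length) (hi : i < cl.length)
    (hri : h[r] = cl[i]) :
    ∀ s, s ≤ r → s ≤ i ∧ ∀ (h1 : r - s < h.length) (h2 : i - s < cl.length),
      h[r-s] = cl[i-s] := by
  intro s
  induction s with
  | zero => exact fun _ => ⟨Nat.zero_le _, fun _ _ => by simpa using hri⟩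
  | succ s ihs =>
    intro hs1
    obtain ⟨hsi, heq⟩ := ihs (Nat.le_of_succ_le hs1)
    have h1 : r - s - 1 + 1 < h.length := by omega
    have hcov : h[r-s-1]'(by omega) ⋖ h[r-s]'(by omega) := by
      have := hsat.covby h1
      convert this using 2 <;> omega
    rw [heq (by omega) (by omega)] at hcov
    obtain ⟨j, hj, hyj, hji⟩ := uc (i - s) (by omega) _ hcov
    have hsi' : s + 1 ≤ i := by omega
    refine ⟨hsi', fun h1' h2' => ?_⟩
    have hidx : i - (s + 1) = j := by omega
    have hridx : r - (s + 1) = r - s - 1 := by omega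
    have : h[r - (s+1)]'h1' = h[r-s-1]'(by omega) := by congr 1
    rw [this, hyj]
    congr 1
    omega

lemma getElem_idx {α : Type*} {l : List α} {i j : ℕ} (h : i = j) {hi : i < l.length} :
    l[i] = l[j]'(h ▸ hi) := by subst h; rfl

end AuxLemmas

/-- If the top of a saturated chain of length `t` in a tree poset is a maximal element
lying in a unique maximal chain, then the chain is a leaf of `Δ_t(P)`. -/
theorem treePoset_chain_isLeaf (P : Type) [PartialOrder P] [Fintype P] [DecidableEq P]
    (hP : IsTreePoset P) (t : ℕ) (ht : 2 ≤ t) (l : List P)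
    (hlen : l.length = t) (hc : IsSatChain l)
    (htop : ∃ b, l.getLast? = some b ∧ IsMax b ∧
      ∃ c, IsMaxSatChain c ∧ b ∈ c ∧ ∀ c', IsMaxSatChain c' → b ∈ c' → c' = c) :
    IsLeafOf l.toFinset (pathFacets P t) := by
  classical
  obtain ⟨b, hlast, hbmax, cl, hclmax, hbc, huniq⟩ := htop
  obtain ⟨hclsat, ⟨a0, ha0head, ha0min⟩, -⟩ := hclmax
  obtain ⟨nb, hnb, hbnb⟩ := List.mem_iff_getElem.mp hbc
  have hnbk : nb = cl.length - 1 := by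
    by_contra hne
    have h1 : nb + 1 < cl.length := by omega
    have hcb := hclsat.covby h1
    rw [hbnb] at hcb
    exact hbmax.not_lt hcb.lt
  have hkpos : 0 < cl.length := by omega
  have hbk : cl[cl.length - 1]'(by omega) = b := by
    rw [← hbnb]; exact (getElem_idx (by omega)).symm
  -- unique lower covers along cl
  have uc : ∀ (i : ℕ) (hi : i < cl.length) (y : P), y ⋖ cl[i] →
      ∃ (j : ℕ) (hj : j < cl.length), y = cl[j] ∧ j + 1 = i := by
    intro i hi y hy
    have hysat : IsSatChain (y :: cl.drop i) := by
      rw [IsSatChain, List.Chain', List.isChain_cons]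
      refine ⟨?_, hclsat.drop i⟩
      intro w hw
      rw [List.head?_drop, List.getElem?_eq_getElem hi, Option.mem_some_iff] at hw
      exact hw ▸ hy
    obtain ⟨m, hmsat, a', ha', ha'min⟩ := exists_min_extension y (y :: cl.drop i) hysat rfl
    have hdropne : cl.drop i ≠ [] := by
      apply List.ne_nil_of_length_pos
      rw [List.length_drop]; omega
    have hlastM : (m ++ (y :: cl.drop i)).getLast? = some b := by
      rw [List.getLast?_append_of_ne_nil _ (List.cons_ne_nil _ _),
        show (y :: cl.drop i) = [y] ++ cl.drop i from rfl,
        List.getLast?_append_of_ne_nil _ hdropne,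
        List.getLast?_eq_getElem?]
      have h2 : (cl.drop i).length - 1 < (cl.drop i).length := by
        rw [List.length_drop]; omega
      rw [List.getElem?_eq_getElem h2, List.getElem_drop]
      rw [getElem_idx (show i + ((cl.drop i).length - 1) = cl.length - 1 by
        rw [List.length_drop]; omega), hbk]
    have hMmax : IsMaxSatChain (m ++ (y :: cl.drop i)) :=
      ⟨hmsat, ⟨a', ha', ha'min⟩, ⟨b, hlastM, hbmax⟩⟩
    have hbM : b ∈ m ++ (y :: cl.drop i) := by
      refine List.mem_append_right _ (List.mem_cons_of_mem _ ?_)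
      refine List.mem_iff_getElem.mpr ⟨cl.length - 1 - i, by rw [List.length_drop]; omega, ?_⟩
      rw [List.getElem_drop, getElem_idx (show i + (cl.length - 1 - i) = cl.length - 1 by omega),
        hbk]
    have hMc := huniq _ hMmax hbM
    have hyM : y ∈ cl := by
      rw [← hMc]; exact List.mem_append_right _ (List.mem_cons_self)
    obtain ⟨j, hj, hyj⟩ := List.mem_iff_getElem.mp hyM
    have hylt : y < cl[i] := hy.lt
    have hji : j < i := by
      rcases lt_trichotomy j i with h' | h' | h'
      · exact h'
      · exfalso
        rw [getElem_idx h'] at hyj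
        rw [← hyj] at hylt
        exact lt_irrefl _ hylt
      · exfalso
        have h2 := hclsat.getElem_lt h' hj
        rw [hyj] at h2
        exact lt_asymm h2 hylt
    refine ⟨j, hj, hyj.symm, ?_⟩
    by_contra hne
    have hlt1 : y < cl[i-1]'(by omega) := by
      rw [← hyj]; exact hclsat.getElem_lt (by omega) (by omega)
    have hlt2 : (cl[i-1]'(by omega)) < cl[i] := hclsat.getElem_lt (by omega) hi
    exact hy.2 hlt1 hlt2
  have htpos : 0 < t := by omega
  have hlt1 : t - 1 < l.length := by omega
  have hlb : l[t-1]'hlt1 = b := by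
    have h0 : l.getLast? = some (l[l.length - 1]'(by omega)) := by
      rw [List.getLast?_eq_getElem?, List.getElem?_eq_getElem]
    rw [h0, Option.some_inj] at hlast
    rw [← hlast]; exact getElem_idx (by omega)
  have hlctop : l[t-1]'hlt1 = cl[cl.length - 1]'(by omega) := by rw [hlb, hbk]
  have hkt : t ≤ cl.length := by
    have := (forced_prefix uc hc hlt1 (by omega) hlctop (t-1) le_rfl).1
    omega
  have hlj : ∀ (j : ℕ) (hj : j < t), l[j]'(by omega) = cl[cl.length - t + j]'(by omega) := by
    intro j hj
    have h2 := (forced_prefix uc hc hlt1 (by omega) hlctop (t-1-j) (by omega)).2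
      (by omega) (by omega)
    rw [getElem_idx (show j = t-1-(t-1-j) by omega), h2]
    exact (getElem_idx (by omega)).symm
  -- any saturated chain with t elements containing b equals l
  have hbforce : ∀ (h : List P), h.length = t → IsSatChain h → b ∈ h → h = l := by
    intro h hht hhs hbh
    obtain ⟨q, hq, hbq⟩ := List.mem_iff_getElem.mp hbh
    have hq1 : q = t - 1 := by
      by_contra hne
      have h1 : q + 1 < h.length := by omega
      have hcb := hhs.covby h1
      rw [hbq] at hcb
      exact hbmax.not_lt hcb.lt
    subst hq1
    apply List.ext_getElem (by omega)
    intro n h1 h2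
    have hhtop : h[t-1]'hq = cl[cl.length - 1]'(by omega) := by rw [hbq, hbk]
    have h3 := (forced_prefix uc hhs hq (by omega) hhtop (t-1-n) (by omega)).2
      (by omega) (by omega)
    rw [getElem_idx (show n = t-1-(t-1-n) by omega), h3,
      hlj n (by omega)]
    exact (getElem_idx (by omega)).symm
  have hFmem : l.toFinset ∈ pathFacets P t := ⟨l, hlen, hc, rfl⟩
  have hbF : b ∈ l.toFinset := by
    rw [List.mem_toFinset, ← hlb]; exact List.getElem_mem _
  have hbH : ∀ H ∈ pathFacets P t, H ≠ l.toFinset → b ∉ H := by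
    rintro H ⟨h, hht, hhs, rfl⟩ hne hbH
    rw [List.mem_toFinset] at hbH
    exact hne (by rw [hbforce h hht hhs hbH])
  have hFidx : ∀ x ∈ l.toFinset, ∃ j, cl.length - t ≤ j ∧ j < cl.length ∧
      ∀ (hj : j < cl.length), x = cl[j] := by
    intro x hx
    rw [List.mem_toFinset, List.mem_iff_getElem] at hx
    obtain ⟨j0, hj0, hxj⟩ := hx
    refine ⟨cl.length - t + j0, by omega, by omega, fun hj => ?_⟩
    rw [← hxj, hlj j0 (by omega)]
  refine ⟨hFmem, ?_⟩
  by_cases hall : ∀ H ∈ pathFacets P t, H = l.toFinset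
  · exact Or.inl (Set.eq_singleton_iff_unique_mem.mpr ⟨hFmem, hall⟩)
  push_neg at hall
  obtain ⟨H0, hH0mem, hH0ne⟩ := hall
  right
  set S : Finset ℕ := (Finset.range cl.length).filter
    (fun mi => ∃ hm : mi < cl.length, (cl[mi]'hm ∈ l.toFinset ∧
      ∃ H ∈ pathFacets P t, H ≠ l.toFinset ∧ cl[mi]'hm ∈ H)) with hSdef
  by_cases hSne : S.Nonempty
  · set mstar := S.max' hSne with hmstardef
    have hmaxmem := Finset.mem_filter.mp (S.max'_mem hSne)
    obtain ⟨-, hmk, hmF, H1, hH1mem, hH1ne, hmH1⟩ := hmaxmem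
    have hxj : ∀ H ∈ pathFacets P t, H ≠ l.toFinset → ∀ x ∈ l.toFinset ∩ H,
        ∃ j, cl.length - t ≤ j ∧ j ≤ mstar ∧ ∀ (hj : j < cl.length), x = cl[j] := by
      intro H hH hne x hx
      rw [Finset.mem_inter] at hx
      obtain ⟨j, hj1, hj2, hj3⟩ := hFidx x hx.1
      refine ⟨j, hj1, ?_, hj3⟩
      refine S.le_max' j (Finset.mem_filter.mpr ⟨Finset.mem_range.mpr hj2, hj2, ?_, ?_⟩)
      · rw [← hj3 hj2]; exact hx.1
      · exact ⟨H, hH, hne, by rw [← hj3 hj2]; exact hx.2⟩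
    obtain ⟨hs, hhs_len, hhs_sat, rfl⟩ := hH1mem
    have hbhs : b ∉ hs := by
      intro hb
      exact hbH hs.toFinset ⟨hs, hhs_len, hhs_sat, rfl⟩ hH1ne (List.mem_toFinset.mpr hb)
    obtain ⟨rstar, hrs, hrseq⟩ := List.mem_iff_getElem.mp (List.mem_toFinset.mp hmH1)
    have hmlt : mstar < cl.length - 1 := by
      rcases Nat.lt_or_ge mstar (cl.length - 1) with h' | h'
      · exact h'
      · exfalso
        apply hbhs
        rw [← hbk, ← getElem_idx (show mstar = cl.length - 1 by omega), ← hrseq]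
        exact List.getElem_mem _
        exact hmk
    have hmge : cl.length - t ≤ mstar := by
      obtain ⟨j, hj1, hj2, hj3⟩ := hFidx _ hmF
      have := (hclsat.nodup.getElem_inj_iff (hi := hmk) (hj := hj2)).mp (hj3 hj2)
      omega
    have hrm : rstar ≤ mstar := (forced_prefix uc hhs_sat hrs hmk hrseq rstar le_rfl).1
    have hfs : ∀ s, s ≤ rstar → ∀ (h1 : rstar - s < hs.length) (h2 : mstar - s < cl.length),
        hs[rstar - s] = cl[mstar - s] :=
      fun s hsr => (forced_prefix uc hhs_sat hrs hmk hrseq s hsr).2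
    by_cases hcase : mstar - rstar ≤ cl.length - t
    · refine ⟨hs.toFinset, ⟨hs, hhs_len, hhs_sat, rfl⟩, hH1ne, ?_⟩
      intro H hH hne x hx
      obtain ⟨j, hj1, hj2, hj3⟩ := hxj H hH hne x hx
      rw [Finset.mem_inter]
      refine ⟨(Finset.mem_inter.mp hx).1, ?_⟩
      rw [List.mem_toFinset]
      have hs2 := hfs (mstar - j) (by omega) (by omega) (by omega)
      rw [hj3 (by omega), getElem_idx (show j = mstar - (mstar - j) by omega), ← hs2]
      exact List.getElem_mem _
    · set L := cl.take (mstar - rstar) ++ hs with hLdef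
      have hlenT : (cl.take (mstar - rstar)).length = mstar - rstar := by
        rw [List.length_take]; omega
      have hLlen : L.length = (mstar - rstar) + t := by
        rw [hLdef, List.length_append, hlenT, hhs_len]
      have hLsat : IsSatChain L := by
        rw [hLdef, IsSatChain, List.Chain', List.isChain_append]
        refine ⟨hclsat.take _, hhs_sat, ?_⟩
        intro x hx y hy
        have hmr1 : 0 < mstar - rstar := by omega
        rw [List.getLast?_eq_getElem?, hlenT,
          List.getElem?_eq_getElem (by rw [hlenT]; omega), Option.mem_some_iff] at hx
        rw [List.head?_eq_getElem?, List.getElem?_eq_getElem (by omega), Option.mem_some_iff] at hy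
        have hy0 : hs[0]'(by omega) = cl[mstar - rstar]'(by omega) := by
          have := hfs rstar le_rfl (by omega) (by omega)
          rw [getElem_idx (show 0 = rstar - rstar by omega), this]
        rw [← hx, ← hy, List.getElem_take, hy0]
        have := hclsat.covby (i := mstar - rstar - 1) (by omega)
        rw [getElem_idx (show mstar - rstar = mstar - rstar - 1 + 1 by omega)]
        exact this
      set g := (L.drop (cl.length - t)).take t with hgdef
      have hglen : g.length = t := by
        rw [hgdef, List.length_take, List.length_drop, hLlen]; omega
      have hgsat : IsSatChain g := (hLsat.drop _).take _
      have hLget : ∀ (j : ℕ), j ≤ mstar → ∀ (hj : j < L.length) (hj2 : j < cl.length),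
          L[j] = cl[j] := by
        intro j hjm hj hj2
        have hj' : j < (cl.take (mstar - rstar) ++ hs).length := by
          rw [List.length_append, hlenT, hhs_len]; omega
        rcases Nat.lt_or_ge j (mstar - rstar) with h' | h'
        · have e1 : (cl.take (mstar - rstar) ++ hs)[j]'hj' = cl[j] := by
            rw [List.getElem_append_left (by rw [hlenT]; exact h')]
            exact List.getElem_take
          exact e1
        · have e1 : (cl.take (mstar - rstar) ++ hs)[j]'hj' = cl[j] := by
            rw [List.getElem_append_right (by rw [hlenT]; exact h')]
            have := hfs (mstar - j) (by omega) (by omega) (by omega)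
            rw [getElem_idx (show j - (cl.take (mstar - rstar)).length = rstar - (mstar - j) by
              rw [hlenT]; omega), this]
            exact (getElem_idx (by omega)).symm
          exact e1
      have hcov : ∀ (j : ℕ), cl.length - t ≤ j → j ≤ mstar → ∀ (hj : j < cl.length),
          cl[j] ∈ g.toFinset := by
        intro j h1 h2 hj
        have hjL : j < L.length := by rw [hLlen]; omega
        have hp' : j - (cl.length - t) < ((L.drop (cl.length - t)).take t).length := by
          rw [List.length_take, List.length_drop, hLlen]; omega
        have hgj : g[j - (cl.length - t)]'(by rw [hglen]; omega) = cl[j] := by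
          have e1 : ((L.drop (cl.length - t)).take t)[j - (cl.length - t)]'hp' = cl[j] := by
            rw [List.getElem_take, List.getElem_drop,
              getElem_idx (show cl.length - t + (j - (cl.length - t)) = j by omega)]
            exact hLget j h2 hjL hj
          exact e1
        rw [List.mem_toFinset, ← hgj]
        exact List.getElem_mem _
      refine ⟨g.toFinset, ⟨g, hglen, hgsat, rfl⟩, ?_, ?_⟩
      · intro hgeq
        have hbg : b ∈ g := List.mem_toFinset.mp (hgeq ▸ hbF)
        have hbL : b ∈ L := List.drop_subset _ _ (List.take_subset _ _ hbg)
        rw [hLdef] at hbL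
        rcases List.mem_append.mp hbL with h' | h'
        · obtain ⟨p, hp, hpe⟩ := List.mem_iff_getElem.mp h'
          rw [List.getElem_take] at hpe
          have hple : p < cl.length := by
            have := hp; rw [hlenT] at this; omega
          have := (hclsat.nodup.getElem_inj_iff (hi := hple) (hj := by omega)).mp
            (hpe.trans hbk.symm)
          rw [hlenT] at hp
          omega
        · exact hbhs h'
      · intro H hH hne x hx
        obtain ⟨j, hj1, hj2, hj3⟩ := hxj H hH hne x hx
        rw [Finset.mem_inter]
        refine ⟨(Finset.mem_inter.mp hx).1, ?_⟩
        rw [hj3 (by omega)]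
        exact hcov j hj1 hj2 (by omega)
  · refine ⟨H0, hH0mem, hH0ne, ?_⟩
    intro H hH hne x hx
    exfalso
    rw [Finset.mem_inter] at hx
    obtain ⟨j, hj1, hj2, hj3⟩ := hFidx x hx.1
    exact hSne ⟨j, Finset.mem_filter.mpr ⟨Finset.mem_range.mpr hj2, hj2,
      by rw [← hj3 hj2]; exact hx.1, H, hH, hne, by rw [← hj3 hj2]; exact hx.2⟩⟩
end
end
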